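/- arXiv:2501.02254 — 10 statements merged into one kernel-verified Lean document; each statement's English description precedes it below -/
import Mathlib

section
/- Let x* ∈ Ω ∩ C. If x* is a global minimizer of the fractional program (P), then (x*, 1/g(x*)) is a global min-max point of the min-max problem min_{x∈ℝⁿ} max_{c∈ℝ} F̃(x,c), i.e., 1/g(x*) is a global maximizer of c ↦ F̃(x*,c) over ℝ and x* is a global minimizer of x ↦ max_{c∈ℝ} F̃(x,c) over Ω ∩ C. Conversely, if (x*, c*) ∈ (Ω ∩ C) × ℝ is a global min-max point of this min-max problem, then x* is a global minimizer of (P). -/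
open Filter Topology Set
open scoped Classical

noncomputable section

/-- `En n` is the Euclidean space `ℝⁿ`. -/
abbrev En (n : ℕ) := EuclideanSpace ℝ (Fin n)

variable {n : ℕ}

/-- `Ω := {x : g x ≠ 0}`. -/
def Omeg (g : En n → ℝ) : Set (En n) := {x | g x ≠ 0}

/-- The extended objective `F` of the fractional program (P), with `h = h₁ - h₂`:
`F x = f x / g x + (h₁ x - h₂ x)` on `Ω ∩ C` and `+∞` elsewhere. -/
def Fobj (f g h₁ h₂ : En n → ℝ) (C : Set (En n)) (x : En n) : EReal :=
  if x ∈ Omeg g ∩ C then ((f x / g x + (h₁ x - h₂ x) : ℝ) : EReal) else ⊤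

/-- The objective `F̃` of the min-max reformulation:
`F̃(x,c) = 2 c f x - c² f x g x + h x + ι_{Ω∩C}(x)`. -/
def Ftil (f g h₁ h₂ : En n → ℝ) (C : Set (En n)) (x : En n) (c : ℝ) : EReal :=
  if x ∈ Omeg g ∩ C then
    ((2 * c * f x - c ^ 2 * f x * g x + (h₁ x - h₂ x) : ℝ) : EReal) else ⊤

/-- The Fréchet subdifferential of an extended-real-valued function on `ℝⁿ`. -/
def fsubdiff (φ : En n → EReal) (x : En n) : Set (En n) :=
  {y | φ x ≠ ⊤ ∧ ∀ ε : ℝ, 0 < ε →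
      ∀ᶠ z in 𝓝 x, φ x + (((inner ℝ y (z - x) : ℝ) - ε * ‖z - x‖ : ℝ) : EReal) ≤ φ z}

/-- The convex (classical) subdifferential of a real-valued function on `ℝⁿ`. -/
def convSubdiff (φ : En n → ℝ) (x : En n) : Set (En n) :=
  {y | ∀ z, φ x + (inner ℝ y (z - x) : ℝ) ≤ φ z}

/-- The convex subdifferential of an extended-real-valued function on `ℝⁿ`. -/
def eSubdiff (φ : En n → EReal) (x : En n) : Set (En n) :=
  {y | ∀ z, φ x + (((inner ℝ y (z - x) : ℝ)) : EReal) ≤ φ z}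

/-- The convex conjugate of a real-valued function. -/
def conjF (φ : En n → ℝ) (y : En n) : EReal :=
  ⨆ x : En n, (((inner ℝ x y : ℝ) - φ x : ℝ) : EReal)

/-- The auxiliary function `Q`. -/
def Qaux (f g h₁ h₂ : En n → ℝ) (C : Set (En n)) (x y z : En n) (c : ℝ) : EReal :=
  if x ∈ C ∧ conjF g y ≠ ⊤ ∧ conjF h₂ z ≠ ⊤ then
    ((2 * c * f x + c ^ 2 * f x * ((conjF g y).toReal - (inner ℝ x y : ℝ))
        + h₁ x + (conjF h₂ z).toReal - (inner ℝ x z : ℝ) : ℝ) : EReal)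
  else ⊤

/-- The proximal operator (as a set) of `t • (f + ι_C)` at `v`. -/
def proxfC (f : En n → ℝ) (C : Set (En n)) (t : ℝ) (v : En n) : Set (En n) :=
  {z | z ∈ C ∧ ∀ w ∈ C, t * f z + ‖v - z‖ ^ 2 / 2 ≤ t * f w + ‖v - w‖ ^ 2 / 2}

/-- The standing assumptions on the data of problem (P). -/
def StandingAssumptions (f g h₁ h₂ : En n → ℝ) (C : Set (En n)) : Prop :=
  (∀ x, 0 ≤ f x) ∧ (∀ x, 0 ≤ g x) ∧
  LowerSemicontinuous f ∧ LowerSemicontinuous g ∧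
  LowerSemicontinuous (fun x => h₁ x - h₂ x) ∧
  IsClosed C ∧ (Omeg g ∩ C).Nonempty ∧
  (∀ x ∈ Omeg g, ∃ s ∈ 𝓝 x, ∃ K : NNReal, LipschitzOnWith K f s) ∧
  ConvexOn ℝ univ g ∧ ConvexOn ℝ univ h₂ ∧
  (∀ x ∈ Omeg g, ∃ δ > 0, (∀ y ∈ Metric.ball x δ, HasGradientAt h₁ (gradient h₁ y) y) ∧
      ∃ K : NNReal, LipschitzOnWith K (gradient h₁) (Metric.ball x δ))

/-- An admissible run of the alternating maximization proximal descent algorithm (AMPDA),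
including the backtracking line-search data: at iteration `k`, the trial points
`trial k j` are computed with stepsizes `αtil k * γ ^ j`, the trials `j < J k` fail the
acceptance test, and `x (k+1) = trial k (J k)` is accepted. -/
structure AMPDA (f g h₁ h₂ : En n → ℝ) (C : Set (En n)) (x0 : En n)
    (αlo αhi σ γ : ℝ) : Type where
  x : ℕ → En n
  y : ℕ → En n
  z : ℕ → En n
  c : ℕ → ℝ
  αtil : ℕ → ℝ
  J : ℕ → ℕ
  trial : ℕ → ℕ → En n
  hx0 : x 0 = x0
  hc : ∀ k, c k = 1 / g (x k)
  hy : ∀ k, y k ∈ convSubdiff g (x k)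
  hz : ∀ k, z k ∈ convSubdiff h₂ (x k)
  hαtil : ∀ k, αlo ≤ αtil k ∧ αtil k ≤ αhi
  htrial : ∀ k j, trial k j ∈ proxfC f C (αtil k * γ ^ j * c k)
      (x k - (αtil k * γ ^ j) • (gradient h₁ (x k) - z k - (c k ^ 2 * f (x k)) • y k))
  hfail : ∀ k, ∀ j < J k, ¬ (trial k j ∈ Omeg g ∧
      Qaux f g h₁ h₂ C (trial k j) (y k) (z k) (1 / g (trial k j))
          + ((σ / 2 * ‖trial k j - x k‖ ^ 2 : ℝ) : EReal)
        ≤ Fobj f g h₁ h₂ C (x k))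
  hstep : ∀ k, x (k + 1) = trial k (J k)
  hmem : ∀ k, x (k + 1) ∈ Omeg g
  haccept : ∀ k,
      Qaux f g h₁ h₂ C (x (k + 1)) (y k) (z k) (1 / g (x (k + 1)))
          + ((σ / 2 * ‖x (k + 1) - x k‖ ^ 2 : ℝ) : EReal)
        ≤ Fobj f g h₁ h₂ C (x k)

/-- The accepted stepsize `α_k` of AMPDA at iteration `k`. -/
def AMPDA.step {f g h₁ h₂ : En n → ℝ} {C : Set (En n)} {x0 : En n} {αlo αhi σ γ : ℝ}
    (A : AMPDA f g h₁ h₂ C x0 αlo αhi σ γ) (k : ℕ) : ℝ := A.αtil k * γ ^ A.J k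

/-- `x⋆` is a critical point of `F`. -/
def isCriticalPt (f g h₁ h₂ : En n → ℝ) (C : Set (En n)) (xs : En n) : Prop :=
  g xs ≠ 0 ∧
  ∃ u ∈ fsubdiff (fun x : En n => if x ∈ C then (((1 / g xs) * f x : ℝ) : EReal) else ⊤) xs,
  ∃ ys ∈ convSubdiff g xs, ∃ zs ∈ convSubdiff h₂ xs,
    (0 : En n) = u - ((1 / g xs) ^ 2 * f xs) • ys + gradient h₁ xs - zs

/-- `xb` is an `ε`-critical point of `F`. -/
def epsCrit (f g h₁ h₂ : En n → ℝ) (C : Set (En n)) (ε : ℝ) (xb : En n) : Prop :=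
  g xb ≠ 0 ∧ ∃ α : ℝ, 0 < α ∧ ∃ yb ∈ convSubdiff g xb, ∃ zb ∈ convSubdiff h₂ xb,
    (proxfC f C (α * (1 / g xb))
        (xb - α • (gradient h₁ xb - zb - ((1 / g xb) ^ 2 * f xb) • yb))).Nonempty ∧
    Metric.infDist xb (proxfC f C (α * (1 / g xb))
        (xb - α • (gradient h₁ xb - zb - ((1 / g xb) ^ 2 * f xb) • yb))) ≤ ε

/-- The product space `ℝⁿ × ℝⁿ × ℝⁿ × ℝ` on which `Q` lives. -/
abbrev E4 (n : ℕ) := En n × En n × En n × ℝ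

/-- The natural inner product on `ℝⁿ × ℝⁿ × ℝⁿ × ℝ`. -/
def inner4 (v w : E4 n) : ℝ :=
  (inner ℝ v.1 w.1 : ℝ) + (inner ℝ v.2.1 w.2.1 : ℝ) + (inner ℝ v.2.2.1 w.2.2.1 : ℝ)
    + v.2.2.2 * w.2.2.2

/-- The Fréchet subdifferential of an extended-real-valued function on
`ℝⁿ × ℝⁿ × ℝⁿ × ℝ`. -/
def fsubdiff4 (φ : E4 n → EReal) (w : E4 n) : Set (E4 n) :=
  {v | φ w ≠ ⊤ ∧ ∀ ε : ℝ, 0 < ε →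
      ∀ᶠ u in 𝓝 w, φ w + ((inner4 v (u - w) - ε * ‖u - w‖ : ℝ) : EReal) ≤ φ u}

/-- The limiting subdifferential of an extended-real-valued function on
`ℝⁿ × ℝⁿ × ℝⁿ × ℝ`. -/
def lsubdiff4 (φ : E4 n → EReal) (w : E4 n) : Set (E4 n) :=
  {v | ∃ (u : ℕ → E4 n) (q : ℕ → E4 n), Tendsto u atTop (𝓝 w) ∧
      Tendsto (fun k => φ (u k)) atTop (𝓝 (φ w)) ∧ Tendsto q atTop (𝓝 v) ∧
      ∀ k, q k ∈ fsubdiff4 φ (u k)}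

/-- The function `Q` as a function on the product space. -/
def QfunOf (f g h₁ h₂ : En n → ℝ) (C : Set (En n)) : E4 n → EReal :=
  fun w => Qaux f g h₁ h₂ C w.1 w.2.1 w.2.2.1 w.2.2.2

/-- The Kurdyka-Łojasiewicz property of `φ` at `w`. -/
def KLAt4 (φ : E4 n → EReal) (w : E4 n) : Prop :=
  ∃ ε : EReal, 0 < ε ∧ ∃ δ : ℝ, 0 < δ ∧ ∃ ψ ψ' : ℝ → ℝ,
    ψ 0 = 0 ∧
    ContinuousOn ψ {t : ℝ | 0 ≤ t ∧ (t : EReal) < ε} ∧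
    ConcaveOn ℝ {t : ℝ | 0 ≤ t ∧ (t : EReal) < ε} ψ ∧
    (∀ t : ℝ, 0 < t → (t : EReal) < ε → HasDerivAt ψ (ψ' t) t ∧ 0 < ψ' t) ∧
    ∀ u : E4 n, ‖u - w‖ < δ → φ w < φ u → φ u < φ w + ε →
      ∀ p ∈ lsubdiff4 φ u, 1 ≤ ψ' ((φ u - φ w).toReal) * ‖p‖

/-- The ℓ¹-norm on `ℝⁿ`. -/
def l1 (x : En n) : ℝ := ∑ i, |x i|

/-- The ℓ²-norm on `ℝⁿ`. -/
def l2 (x : En n) : ℝ := ‖x‖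

/-- `S_μ`, the set of vectors with at most `μ` nonzero entries. -/
def Smu (μ : ℕ) : Set (En n) := {z | {j | z j ≠ 0}.ncard ≤ μ}

/-- `h₁` for the robust signal recovery models: `(λ/2) ‖A x - b‖²`. -/
def h1L {m : ℕ} (A : En n →ₗ[ℝ] En m) (b : En m) (lam : ℝ) (x : En n) : ℝ :=
  lam / 2 * ‖A x - b‖ ^ 2

/-- `h₂` for the robust signal recovery models:
`(λ/2) ‖T_μ (A x - b)‖² = (λ/2) (‖A x - b‖² - dist²(A x - b, S_μ))`. -/
def h2L {m : ℕ} (A : En n →ₗ[ℝ] En m) (b : En m) (lam : ℝ) (μ : ℕ) (x : En n) : ℝ :=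
  lam / 2 * (‖A x - b‖ ^ 2 - (Metric.infDist (A x - b) (Smu μ)) ^ 2)

/-- The box constraint `{x : x̲ ≤ x ≤ x̄}`. -/
def box (xlo xhi : En n) : Set (En n) := {x | ∀ i, xlo i ≤ x i ∧ x i ≤ xhi i}


/-- equivalence of global minimizers of (P) and global min-max points of the
min-max reformulation. -/
theorem statement0 (f g h₁ h₂ : En n → ℝ) (C : Set (En n))
    (hSA : StandingAssumptions f g h₁ h₂ C)
    (xs : En n) (hxs : xs ∈ Omeg g ∩ C) :
    ((∀ x ∈ Omeg g ∩ C, Fobj f g h₁ h₂ C xs ≤ Fobj f g h₁ h₂ C x) →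
      (∀ c : ℝ, Ftil f g h₁ h₂ C xs c ≤ Ftil f g h₁ h₂ C xs (1 / g xs)) ∧
      (∀ x ∈ Omeg g ∩ C,
        (⨆ c : ℝ, Ftil f g h₁ h₂ C xs c) ≤ ⨆ c : ℝ, Ftil f g h₁ h₂ C x c)) ∧
    (∀ cs : ℝ,
      ((∀ c : ℝ, Ftil f g h₁ h₂ C xs c ≤ Ftil f g h₁ h₂ C xs cs) ∧
       (∀ x ∈ Omeg g ∩ C,
        (⨆ c : ℝ, Ftil f g h₁ h₂ C xs c) ≤ ⨆ c : ℝ, Ftil f g h₁ h₂ C x c)) →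
      ∀ x ∈ Omeg g ∩ C, Fobj f g h₁ h₂ C xs ≤ Fobj f g h₁ h₂ C x) := by
  have hf0 := hSA.1
  have hg0 := hSA.2.1
  -- pointwise: for x in Omeg g ∩ C, Ftil x c ≤ Ftil x (1/g x)
  have key : ∀ x ∈ Omeg g ∩ C, ∀ c : ℝ,
      Ftil f g h₁ h₂ C x c ≤ Ftil f g h₁ h₂ C x (1 / g x) := by
    intro x hx c
    have hg : 0 < g x := lt_of_le_of_ne (hg0 x) (Ne.symm hx.1)
    simp only [Ftil, if_pos hx, EReal.coe_le_coe_iff]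
    have h1 : 2 * (1 / g x) * f x - (1 / g x) ^ 2 * f x * g x = f x / g x := by
      field_simp; ring
    rw [h1]
    have h2 : 2 * c * f x - c ^ 2 * f x * g x ≤ f x / g x := by
      rw [div_eq_mul_inv]
      nlinarith [mul_nonneg (hf0 x) (mul_nonneg hg.le (sq_nonneg (c - 1 / g x))),
        mul_inv_cancel₀ (ne_of_gt hg), sq_nonneg (1 - c * g x), hf0 x, hg]
    linarith
  have heq : ∀ x ∈ Omeg g ∩ C,
      Ftil f g h₁ h₂ C x (1 / g x) = Fobj f g h₁ h₂ C x := by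
    intro x hx
    have hg : 0 < g x := lt_of_le_of_ne (hg0 x) (Ne.symm hx.1)
    simp only [Ftil, Fobj, if_pos hx, EReal.coe_eq_coe_iff]
    have h1 : 2 * (1 / g x) * f x - (1 / g x) ^ 2 * f x * g x = f x / g x := by
      field_simp; ring
    rw [h1]
  have hsup : ∀ x ∈ Omeg g ∩ C,
      (⨆ c : ℝ, Ftil f g h₁ h₂ C x c) = Fobj f g h₁ h₂ C x := by
    intro x hx
    refine le_antisymm (iSup_le fun c => (key x hx c).trans_eq (heq x hx)) ?_
    rw [← heq x hx]
    exact le_iSup (fun c => Ftil f g h₁ h₂ C x c) (1 / g x)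
  constructor
  · intro hmin
    refine ⟨key xs hxs, fun x hx => ?_⟩
    rw [hsup xs hxs, hsup x hx]
    exact hmin x hx
  · intro cs ⟨_, hmm⟩ x hx
    rw [← hsup xs hxs, ← hsup x hx]
    exact hmm x hx
end
end

section
/- Let x* ∈ Ω ∩ C. If x* is a local minimizer of the fractional program (P), then (x*, 1/g(x*)) is a local min-max point of min_{x∈ℝⁿ} max_{c∈ℝ} F̃(x,c). Conversely, if (x*, c*) ∈ (Ω ∩ C) × ℝ is a local min-max point of this min-max problem, then x* is a local minimizer of (P). -/
open Filter Topology Set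
open scoped Classical

noncomputable section

variable {n : ℕ}

lemma key_ineq' {F G c : ℝ} (hF : 0 ≤ F) (hG : 0 < G) :
    2 * c * F - c ^ 2 * F * G ≤ F / G := by
  rw [div_eq_mul_inv]
  have h1 : G⁻¹ * G = 1 := inv_mul_cancel₀ hG.ne'
  nlinarith [mul_nonneg (mul_nonneg hF (inv_pos.mpr hG).le) (sq_nonneg (c * G - 1)), h1]


/-- equivalence of local minimizers of (P) and local min-max points of the
min-max reformulation. -/
theorem statement1 (f g h₁ h₂ : En n → ℝ) (C : Set (En n))
    (hSA : StandingAssumptions f g h₁ h₂ C)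
    (xs : En n) (hxs : xs ∈ Omeg g ∩ C) :
    ((∃ δ > 0, ∀ x ∈ Metric.ball xs δ ∩ (Omeg g ∩ C),
        Fobj f g h₁ h₂ C xs ≤ Fobj f g h₁ h₂ C x) →
      ((∃ ρ > 0, ∀ c : ℝ, |c - 1 / g xs| < ρ →
          Ftil f g h₁ h₂ C xs c ≤ Ftil f g h₁ h₂ C xs (1 / g xs)) ∧
       (∃ ε₀ > 0, ∀ ε : ℝ, 0 < ε → ε ≤ ε₀ → ∃ δ > 0,
          ∀ x ∈ Metric.ball xs δ ∩ (Omeg g ∩ C),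
            (⨆ c : ℝ, ⨆ (_ : |c - 1 / g xs| ≤ ε), Ftil f g h₁ h₂ C xs c) ≤
              ⨆ c : ℝ, ⨆ (_ : |c - 1 / g xs| ≤ ε), Ftil f g h₁ h₂ C x c))) ∧
    (∀ cs : ℝ,
      ((∃ ρ > 0, ∀ c : ℝ, |c - cs| < ρ →
          Ftil f g h₁ h₂ C xs c ≤ Ftil f g h₁ h₂ C xs cs) ∧
       (∃ ε₀ > 0, ∀ ε : ℝ, 0 < ε → ε ≤ ε₀ → ∃ δ > 0,
          ∀ x ∈ Metric.ball xs δ ∩ (Omeg g ∩ C),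
            (⨆ c : ℝ, ⨆ (_ : |c - cs| ≤ ε), Ftil f g h₁ h₂ C xs c) ≤
              ⨆ c : ℝ, ⨆ (_ : |c - cs| ≤ ε), Ftil f g h₁ h₂ C x c)) →
      ∃ δ > 0, ∀ x ∈ Metric.ball xs δ ∩ (Omeg g ∩ C),
        Fobj f g h₁ h₂ C xs ≤ Fobj f g h₁ h₂ C x) := by

  obtain ⟨hf0, hg0, -, -, -, -, -, -, hgconv, -, -⟩ := hSA
  have hgpos : ∀ x ∈ Omeg g ∩ C, 0 < g x := fun x hx =>
    lt_of_le_of_ne (hg0 x) (Ne.symm hx.1)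
  -- F̃(x,c) ≤ F(x) for x ∈ Ω ∩ C
  have hFt : ∀ x ∈ Omeg g ∩ C, ∀ c : ℝ,
      Ftil f g h₁ h₂ C x c ≤ Fobj f g h₁ h₂ C x := by
    intro x hx c
    rw [Ftil, Fobj, if_pos hx, if_pos hx, EReal.coe_le_coe_iff]
    have := key_ineq' (hf0 x) (hgpos x hx) (c := c)
    linarith
  -- F̃(x, 1/g x) = F(x)
  have hFeq : ∀ x ∈ Omeg g ∩ C, Ftil f g h₁ h₂ C x (1 / g x) = Fobj f g h₁ h₂ C x := by
    intro x hx
    rw [Ftil, Fobj, if_pos hx, if_pos hx]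
    norm_cast
    have hgx : g x ≠ 0 := hx.1
    field_simp
    ring
  constructor
  · rintro ⟨δ0, hδ0, hloc⟩
    constructor
    · exact ⟨1, one_pos, fun c _ => (hFeq xs hxs) ▸ hFt xs hxs c⟩
    · refine ⟨1, one_pos, fun ε hε _ => ?_⟩
      -- continuity of 1/g at xs
      have hgc : Continuous g := continuousOn_univ.mp (hgconv.continuousOn isOpen_univ)
      have hcont : ContinuousAt (fun x => 1 / g x) xs :=
        (continuousAt_const.div hgc.continuousAt hxs.1)
      have hev : ∀ᶠ x in 𝓝 xs, dist (1 / g x) (1 / g xs) < ε :=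
        Metric.tendsto_nhds.mp hcont ε hε
      rw [Metric.eventually_nhds_iff] at hev
      obtain ⟨δ1, hδ1, hd⟩ := hev
      refine ⟨min δ0 δ1, lt_min hδ0 hδ1, fun x hx => ?_⟩
      have hxB : x ∈ Metric.ball xs δ0 := by
        have := hx.1; rw [Metric.mem_ball] at *; exact lt_of_lt_of_le this (min_le_left _ _)
      have hx1 : dist x xs < δ1 := lt_of_lt_of_le (Metric.mem_ball.mp hx.1) (min_le_right _ _)
      have hcc : |1 / g x - 1 / g xs| ≤ ε := by
        have := hd hx1; rw [Real.dist_eq] at this; exact this.le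
      calc (⨆ c : ℝ, ⨆ (_ : |c - 1 / g xs| ≤ ε), Ftil f g h₁ h₂ C xs c)
          ≤ Fobj f g h₁ h₂ C xs := iSup₂_le fun c _ => hFt xs hxs c
        _ ≤ Fobj f g h₁ h₂ C x := hloc x ⟨hxB, hx.2⟩
        _ = Ftil f g h₁ h₂ C x (1 / g x) := (hFeq x hx.2).symm
        _ ≤ ⨆ c : ℝ, ⨆ (_ : |c - 1 / g xs| ≤ ε), Ftil f g h₁ h₂ C x c :=
            le_iSup₂ (f := fun c (_ : |c - 1 / g xs| ≤ ε) => Ftil f g h₁ h₂ C x c)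
              (1 / g x) hcc
  · rintro cs ⟨⟨ρ, hρ, hmax⟩, ⟨ε₀, hε₀, hb⟩⟩
    -- cs is a local max of the quadratic, hence f xs = cs * f xs * g xs
    have hql : IsLocalMax
        (fun c : ℝ => 2 * c * f xs - c ^ 2 * f xs * g xs + (h₁ xs - h₂ xs)) cs := by
      rw [IsLocalMax, IsMaxFilter, Metric.eventually_nhds_iff]
      refine ⟨ρ, hρ, fun c hc => ?_⟩
      have := hmax c (by rwa [Real.dist_eq] at hc)
      rwa [Ftil, Ftil, if_pos hxs, if_pos hxs, EReal.coe_le_coe_iff] at this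
    have hder : HasDerivAt
        (fun c : ℝ => 2 * c * f xs - c ^ 2 * f xs * g xs + (h₁ xs - h₂ xs))
        (2 * f xs - 2 * cs * (f xs * g xs)) cs := by
      have h1 : HasDerivAt (fun c : ℝ => c) 1 cs := hasDerivAt_id cs
      have h2 : HasDerivAt (fun c : ℝ => c ^ 2) (2 * cs) cs := by
        simpa using hasDerivAt_pow 2 cs
      have h3 := (((h1.const_mul 2).mul_const (f xs)).sub
        (((h2.mul_const (f xs)).mul_const (g xs)))).add_const (h₁ xs - h₂ xs)
      refine h3.congr_deriv ?_
      ring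
    have hd0 : 2 * f xs - 2 * cs * (f xs * g xs) = 0 := hql.hasDerivAt_eq_zero hder
    have hfcs : f xs = cs * f xs * g xs := by linarith
    have hFeqcs : Ftil f g h₁ h₂ C xs cs = Fobj f g h₁ h₂ C xs := by
      rw [Ftil, Fobj, if_pos hxs, if_pos hxs]
      norm_cast
      have hfg : f xs / g xs = cs * f xs := by
        rw [div_eq_iff hxs.1]; linarith
      rw [hfg]
      linear_combination cs * hfcs
    obtain ⟨δ, hδ, hloc⟩ := hb ε₀ hε₀ le_rfl
    refine ⟨δ, hδ, fun x hx => ?_⟩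
    calc Fobj f g h₁ h₂ C xs = Ftil f g h₁ h₂ C xs cs := hFeqcs.symm
      _ ≤ ⨆ c : ℝ, ⨆ (_ : |c - cs| ≤ ε₀), Ftil f g h₁ h₂ C xs c :=
          le_iSup₂ (f := fun c (_ : |c - cs| ≤ ε₀) => Ftil f g h₁ h₂ C xs c) cs
            (by simp [hε₀.le])
      _ ≤ ⨆ c : ℝ, ⨆ (_ : |c - cs| ≤ ε₀), Ftil f g h₁ h₂ C x c := hloc x hx
      _ ≤ Fobj f g h₁ h₂ C x := iSup₂_le fun c _ => hFt x hx.2 c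
end
end

section
/- Let x* ∈ Ω ∩ C. If 0 ∈ ∂̂F(x*), then with c* = 1/g(x*) one has both 0 ∈ ∂̂_x F̃(x*, c*) (the Fréchet subdifferential of x ↦ F̃(x, c*) at x*) and 0 = ∇_c F̃(x*, c*) (the derivative of c ↦ F̃(x*, c) at c*). Conversely, if a pair (x*, c*) ∈ (Ω∩C) × ℝ satisfies 0 ∈ ∂̂_x F̃(x*, c*) and 0 = ∇_c F̃(x*, c*), then 0 ∈ ∂̂F(x*). -/
open Filter Topology Set
open scoped Classical

noncomputable section

variable {n : ℕ}

lemma myKeyEq {fz gz c : ℝ} (hg : gz ≠ 0) :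
    fz / gz - (2 * c * fz - c ^ 2 * fz * gz) = fz / gz * (1 - c * gz) ^ 2 := by
  field_simp; ring

lemma myKeyIneq {fz gz c : ℝ} (hf : 0 ≤ fz) (hg : 0 < gz) :
    2 * c * fz - c ^ 2 * fz * gz ≤ fz / gz := by
  have h1 : 0 ≤ fz / gz * (1 - c * gz) ^ 2 := by positivity
  have h2 := myKeyEq (fz := fz) (c := c) hg.ne'
  linarith

lemma myDeriv (a b d c : ℝ) :
    HasDerivAt (fun c : ℝ => 2 * c * a - c ^ 2 * a * b + d) (2 * a - 2 * c * a * b) c := by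
  have h1 : HasDerivAt (fun c : ℝ => 2 * c * a) (2 * a) c := by
    simpa using ((hasDerivAt_id c).const_mul 2).mul_const a
  have h2 : HasDerivAt (fun c : ℝ => c ^ 2 * a * b) (2 * c * a * b) c := by
    have := ((hasDerivAt_pow 2 c).mul_const a).mul_const b
    simpa [mul_comm, mul_assoc, mul_left_comm] using this
  simpa using (h1.sub h2).add_const d

set_option maxHeartbeats 1000000 in
/-- equivalence of Fréchet stationary points of `F` and stationary points
of the min-max reformulation. -/
theorem statement2 (f g h₁ h₂ : En n → ℝ) (C : Set (En n))
    (hSA : StandingAssumptions f g h₁ h₂ C)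
    (xs : En n) (hxs : xs ∈ Omeg g ∩ C) :
    ((0 : En n) ∈ fsubdiff (Fobj f g h₁ h₂ C) xs →
      (0 : En n) ∈ fsubdiff (fun x => Ftil f g h₁ h₂ C x (1 / g xs)) xs ∧
      HasDerivAt (fun c : ℝ => 2 * c * f xs - c ^ 2 * f xs * g xs + (h₁ xs - h₂ xs))
        0 (1 / g xs)) ∧
    (∀ cs : ℝ,
      ((0 : En n) ∈ fsubdiff (fun x => Ftil f g h₁ h₂ C x cs) xs ∧
       HasDerivAt (fun c : ℝ => 2 * c * f xs - c ^ 2 * f xs * g xs + (h₁ xs - h₂ xs))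
        0 cs) →
      (0 : En n) ∈ fsubdiff (Fobj f g h₁ h₂ C) xs) := by
  obtain ⟨hf0, hg0, -, -, -, -, -, hfl, hgc, -, -⟩ := hSA
  obtain ⟨hxsΩ, hxsC⟩ := id hxs
  have hG : 0 < g xs := lt_of_le_of_ne (hg0 xs) (Ne.symm hxsΩ)
  have hval : 2 * (1 / g xs) * f xs - (1 / g xs) ^ 2 * f xs * g xs = f xs / g xs := by
    field_simp; ring
  constructor
  · rintro ⟨hne, hev⟩
    constructor
    · -- Fréchet subdifferential of x ↦ F̃(x, 1/g(xs)) at xs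
      refine ⟨by simp only [Ftil, if_pos hxs]; exact EReal.coe_ne_top _, fun ε hε => ?_⟩
      obtain ⟨K, t, ht, hKt⟩ := hgc.locallyLipschitz xs
      have hxst : xs ∈ t := mem_of_mem_nhds ht
      have hgcont : ContinuousAt g xs := hKt.continuousOn.continuousAt ht
      obtain ⟨s, hs, Kf, hKfs⟩ := hfl xs hxsΩ
      have hfcont : ContinuousAt f xs := hKfs.continuousOn.continuousAt hs
      set M : ℝ := f xs + 1 with hMdef
      have hMpos : 0 < M := by have := hf0 xs; simp only [hMdef]; linarith
      set Kr : ℝ := (K : ℝ) + 1 with hKrdef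
      have hKrpos : 0 < Kr := by positivity
      set δ : ℝ := ε * (g xs) ^ 3 / (8 * M * Kr) with hδdef
      have hδ : 0 < δ := by positivity
      have ev1 : ∀ᶠ z in 𝓝 xs, g xs / 2 < g z :=
        hgcont.eventually (eventually_gt_nhds (by linarith))
      have ev2 : ∀ᶠ z in 𝓝 xs, |g z - g xs| < δ := by
        have := Metric.tendsto_nhds.mp hgcont δ hδ
        simpa [Real.dist_eq] using this
      have ev3 : ∀ᶠ z in 𝓝 xs, f z < M :=
        hfcont.eventually (eventually_lt_nhds (by simp only [hMdef]; linarith))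
      filter_upwards [hev (ε / 2) (by linarith), ev1, ev2, ev3, ht]
        with z hz hg2 hgδ hfz hzt
      by_cases hzm : z ∈ Omeg g ∩ C
      · have hgz : 0 < g z := by have : (0:ℝ) < g xs / 2 := by linarith
                                 linarith
        simp only [Fobj, if_pos hxs, if_pos hzm] at hz
        simp only [Ftil, if_pos hxs, if_pos hzm]
        rw [← EReal.coe_add, EReal.coe_le_coe_iff] at hz
        rw [← EReal.coe_add, EReal.coe_le_coe_iff]
        have hi : (inner ℝ (0 : En n) (z - xs) : ℝ) = 0 := inner_zero_left _
        -- gap estimate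
        have egap : f z / g z - (2 * (1 / g xs) * f z - (1 / g xs) ^ 2 * f z * g z)
            = f z * (g xs - g z) ^ 2 / (g z * g xs ^ 2) := by
          field_simp; ring
        have habs : |g z - g xs| ≤ Kr * ‖z - xs‖ := by
          have h1 := hKt.dist_le_mul z hzt xs hxst
          rw [Real.dist_eq, dist_eq_norm] at h1
          have h2 : (K : ℝ) * ‖z - xs‖ ≤ Kr * ‖z - xs‖ :=
            mul_le_mul_of_nonneg_right (by simp only [hKrdef]; linarith) (norm_nonneg _)
          linarith
        have hsq : (g xs - g z) ^ 2 ≤ (Kr * ‖z - xs‖) * δ := by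
          have h1 : |g z - g xs| * |g z - g xs| ≤ (Kr * ‖z - xs‖) * δ :=
            mul_le_mul habs hgδ.le (abs_nonneg _) (by positivity)
          nlinarith [sq_abs (g z - g xs)]
        have hnum : f z * (g xs - g z) ^ 2 ≤ M * ((Kr * ‖z - xs‖) * δ) :=
          mul_le_mul hfz.le hsq (sq_nonneg _) hMpos.le
        have hMKδ : M * ((Kr * ‖z - xs‖) * δ) = ε * g xs ^ 3 / 8 * ‖z - xs‖ := by
          rw [hδdef]; field_simp
        have hc : ε * g xs ^ 3 / 8 ≤ ε / 2 * (g z * g xs ^ 2) := by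
          nlinarith [mul_nonneg (mul_nonneg hε.le (mul_nonneg hG.le hG.le))
            (by linarith : (0:ℝ) ≤ g z - g xs / 2),
            mul_nonneg hε.le (pow_nonneg hG.le 3)]
        have hgap : f z * (g xs - g z) ^ 2 / (g z * g xs ^ 2) ≤ ε / 2 * ‖z - xs‖ := by
          rw [div_le_iff₀ (by positivity : (0:ℝ) < g z * g xs ^ 2)]
          have h3 := mul_le_mul_of_nonneg_right hc (norm_nonneg (z - xs))
          rw [hMKδ] at hnum
          linarith
        linarith [hz, hi, egap, hgap, hval]
      · simp only [Ftil, if_neg hzm]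
        exact le_top
    · -- derivative in c vanishes at 1/g(xs)
      have hd := myDeriv (f xs) (g xs) (h₁ xs - h₂ xs) (1 / g xs)
      have hz0 : 2 * f xs - 2 * (1 / g xs) * f xs * g xs = 0 := by field_simp; ring
      rwa [hz0] at hd
  · rintro cs ⟨⟨hne, hev⟩, hD⟩
    have hd := myDeriv (f xs) (g xs) (h₁ xs - h₂ xs) cs
    have h0 : 2 * f xs - 2 * cs * f xs * g xs = 0 := hd.unique hD
    have hfac : f xs * (1 - cs * g xs) = 0 := by nlinarith [h0]
    have hgap0 : f xs / g xs * (1 - cs * g xs) ^ 2 = 0 := by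
      have h1 : f xs / g xs * (1 - cs * g xs) ^ 2
          = (1 - cs * g xs) / g xs * (f xs * (1 - cs * g xs)) := by ring
      rw [h1, hfac, mul_zero]
    have hvals : (2 * cs * f xs - cs ^ 2 * f xs * g xs : ℝ) = f xs / g xs := by
      have := myKeyEq (fz := f xs) (gz := g xs) (c := cs) hG.ne'
      linarith
    refine ⟨by simp only [Fobj, if_pos hxs]; exact EReal.coe_ne_top _, fun ε hε => ?_⟩
    filter_upwards [hev ε hε] with z hz
    by_cases hzm : z ∈ Omeg g ∩ C
    · have hgz : 0 < g z := lt_of_le_of_ne (hg0 z) (Ne.symm hzm.1)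
      simp only [Ftil, if_pos hxs, if_pos hzm] at hz
      simp only [Fobj, if_pos hxs, if_pos hzm]
      rw [← EReal.coe_add, EReal.coe_le_coe_iff] at hz
      rw [← EReal.coe_add, EReal.coe_le_coe_iff]
      have hkz := myKeyIneq (c := cs) (hf0 z) hgz
      linarith
    · simp only [Fobj, if_neg hzm]
      exact le_top
end
end

section
/- If 0 ∈ ∂̂F(x*), then with c* = 1/g(x*) it holds that 0 ∈ ∂̂(c* f + ι_C)(x*) − c*² f(x*) ∂g(x*) + ∇h₁(x*) − ∂h₂(x*). Moreover, if in addition g and h₂ are differentiable at x*, then conversely this inclusion with c* = 1/g(x*) implies 0 ∈ ∂̂F(x*). -/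
open Filter Topology Set
open scoped Classical

set_option maxHeartbeats 1000000

noncomputable section

variable {n : ℕ}

lemma Fobj_mem {f g h₁ h₂ : En n → ℝ} {C : Set (En n)} {z : En n} (hz : z ∈ Omeg g ∩ C) :
    Fobj f g h₁ h₂ C z = ((f z / g z + (h₁ z - h₂ z) : ℝ) : EReal) := by
  rw [Fobj, if_pos hz]

lemma grad_approx {φ : En n → ℝ} {G x : En n} (h : HasGradientAt φ G x) {ε : ℝ} (hε : 0 < ε) :
    ∀ᶠ z in 𝓝 x, |φ z - φ x - (inner ℝ G (z - x) : ℝ)| ≤ ε * ‖z - x‖ := by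
  have h2 := Asymptotics.isLittleO_iff.mp (hasGradientAt_iff_isLittleO.mp h) hε
  filter_upwards [h2] with z hz
  simpa [Real.norm_eq_abs] using hz

lemma exists_convSubdiff {g : En n → ℝ} (hg : ConvexOn ℝ (univ : Set (En n)) g) (x : En n) :
    ∃ y, y ∈ convSubdiff g x := by
  have hgc : Continuous g := hg.locallyLipschitz.continuous
  set s : Set (En n × ℝ) := {p | g p.1 < p.2} with hs
  have hconv : Convex ℝ s := by
    intro p hp q hq a b ha hb hab
    have hp' : g p.1 < p.2 := hp
    have hq' : g q.1 < q.2 := hq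
    show g (a • p + b • q).1 < (a • p + b • q).2
    have h1 : (a • p + b • q).1 = a • p.1 + b • q.1 := rfl
    have h2 : (a • p + b • q).2 = a * p.2 + b * q.2 := rfl
    rw [h1, h2]
    have hcv : g (a • p.1 + b • q.1) ≤ a * g p.1 + b * g q.1 := by
      have := hg.2 (mem_univ p.1) (mem_univ q.1) ha hb hab
      simpa [smul_eq_mul] using this
    rcases eq_or_lt_of_le ha with h0 | hapos
    · have hb1 : b = 1 := by linarith
      have h5 : a * g p.1 + b * g q.1 < a * p.2 + b * q.2 := by
        rw [← h0, hb1]; simpa using hq'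
      linarith
    · have h3 : a * g p.1 < a * p.2 := (mul_lt_mul_iff_right₀ hapos).mpr hp'
      have h4 : b * g q.1 ≤ b * q.2 := mul_le_mul_of_nonneg_left hq'.le hb
      linarith
  have hopen : IsOpen s := by
    have : s = (fun p : En n × ℝ => p.2 - g p.1) ⁻¹' Ioi 0 := by
      ext p; simp [hs, sub_pos]
    rw [this]
    exact isOpen_Ioi.preimage (continuous_snd.sub (hgc.comp continuous_fst))
  have hxns : (x, g x) ∉ s := by simp [hs]
  obtain ⟨φ, hφ⟩ := geometric_hahn_banach_open_point hconv hopen hxns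
  set β := φ ((0 : En n), (1 : ℝ)) with hβdef
  have hdec : ∀ (v : En n) (t : ℝ), φ (v, t) = φ (v, 0) + t * β := by
    intro v t
    have h1 : (v, t) = (v, (0:ℝ)) + t • ((0 : En n), (1:ℝ)) := by
      simp [Prod.ext_iff]
    rw [h1, map_add, map_smul, smul_eq_mul]
  have hβ : β < 0 := by
    have h1 := hφ (x, g x + 1) (by simp [hs])
    rw [hdec x (g x + 1), hdec x (g x)] at h1; linarith
  have key : ∀ z, φ (z, 0) + g z * β ≤ φ (x, 0) + g x * β := by
    intro z
    by_contra hcon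
    push_neg at hcon
    set η := (φ (z,0) + g z * β) - (φ (x,0) + g x * β) with hη
    have hηpos : 0 < η := by linarith
    have hmem : (z, g z + η / (-β)) ∈ s := by
      simp only [hs, mem_setOf_eq]
      have : 0 < η / (-β) := div_pos hηpos (by linarith)
      linarith
    have h1 := hφ _ hmem
    rw [hdec z (g z + η / -β), hdec x (g x)] at h1
    have hb0 : β ≠ 0 := hβ.ne
    have hmul : (g z + η / -β) * β = g z * β - η := by
      have h5 : η / -β * β = -η := by
        rw [div_neg, neg_mul, div_mul_cancel₀ _ hb0]
      calc (g z + η / -β) * β = g z * β + η / -β * β := by ring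
        _ = g z * β - η := by rw [h5]; ring
    rw [hmul] at h1
    linarith
  set L : En n →L[ℝ] ℝ := φ.comp (ContinuousLinearMap.inl ℝ (En n) ℝ) with hL
  have hLv : ∀ v : En n, L v = φ (v, 0) := fun v => rfl
  set w : En n := (InnerProductSpace.toDual ℝ (En n)).symm L with hw
  have hwv : ∀ v : En n, (inner ℝ w v : ℝ) = φ (v, 0) := by
    intro v
    rw [hw, InnerProductSpace.toDual_symm_apply]
    rfl
  refine ⟨(-β)⁻¹ • w, fun z => ?_⟩
  have hinner : (inner ℝ ((-β)⁻¹ • w) (z - x) : ℝ) = (-β)⁻¹ * (φ (z,0) - φ (x,0)) := by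
    rw [real_inner_smul_left]
    congr 1
    rw [show (z - x : En n) = z - x from rfl]
    rw [inner_sub_right, hwv, hwv]
  have h2 : φ (z,0) - φ (x,0) ≤ (g z - g x) * (-β) := by
    have := key z; nlinarith
  have h3 : (-β)⁻¹ * (φ (z,0) - φ (x,0)) ≤ g z - g x := by
    have hpos : 0 < -β := by linarith
    rw [inv_mul_le_iff₀ hpos]
    calc φ (z,0) - φ (x,0) ≤ (g z - g x) * (-β) := h2
      _ = -β * (g z - g x) := by ring
  rw [hinner]
  linarith

lemma convSubdiff_eq_grad {g : En n → ℝ} {y G x : En n}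
    (hy : y ∈ convSubdiff g x) (hG : HasGradientAt g G x) : y = G := by
  have hf : HasFDerivAt g (InnerProductSpace.toDual ℝ (En n) G) x :=
    hasGradientAt_iff_hasFDerivAt.mp hG
  have hlin : HasFDerivAt (fun z : En n => (inner ℝ y z : ℝ)) (innerSL ℝ y) x :=
    (innerSL ℝ y).hasFDerivAt
  have hψ : HasFDerivAt (fun z => g z - (inner ℝ y z : ℝ))
      (InnerProductSpace.toDual ℝ (En n) G - innerSL ℝ y) x := hf.sub hlin
  have hmin : IsLocalMin (fun z => g z - (inner ℝ y z : ℝ)) x := by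
    apply Filter.Eventually.of_forall
    intro z
    have h1 := hy z
    rw [inner_sub_right] at h1
    simp only
    linarith
  have h0 := hmin.hasFDerivAt_eq_zero hψ
  have hall : ∀ v : En n, (inner ℝ (G - y) v : ℝ) = 0 := by
    intro v
    have := ContinuousLinearMap.ext_iff.mp h0 v
    simp only [ContinuousLinearMap.sub_apply, ContinuousLinearMap.zero_apply,
      innerSL_apply_apply, InnerProductSpace.toDual_apply_apply] at this
    rw [inner_sub_left]
    linarith
  have := hall (G - y)
  rw [inner_self_eq_zero] at this
  have : G = y := by
    have h' := sub_eq_zero.mp this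
    exact h'
  exact this.symm

/-- the first-order necessary condition derived from `0 ∈ ∂̂F(x⋆)`, and its
sufficiency when `g` and `h₂` are differentiable at `x⋆`. -/
theorem statement3 (f g h₁ h₂ : En n → ℝ) (C : Set (En n))
    (hSA : StandingAssumptions f g h₁ h₂ C)
    (xs : En n) (hxs : xs ∈ Omeg g ∩ C) :
    ((0 : En n) ∈ fsubdiff (Fobj f g h₁ h₂ C) xs →
      ∃ u ∈ fsubdiff
          (fun x : En n => if x ∈ C then (((1 / g xs) * f x : ℝ) : EReal) else ⊤) xs,
      ∃ yg ∈ convSubdiff g xs, ∃ zh ∈ convSubdiff h₂ xs,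
        (0 : En n) = u - ((1 / g xs) ^ 2 * f xs) • yg + gradient h₁ xs - zh) ∧
    ((HasGradientAt g (gradient g xs) xs ∧ HasGradientAt h₂ (gradient h₂ xs) xs) →
      (∃ u ∈ fsubdiff
          (fun x : En n => if x ∈ C then (((1 / g xs) * f x : ℝ) : EReal) else ⊤) xs,
       ∃ yg ∈ convSubdiff g xs, ∃ zh ∈ convSubdiff h₂ xs,
        (0 : En n) = u - ((1 / g xs) ^ 2 * f xs) • yg + gradient h₁ xs - zh) →
      (0 : En n) ∈ fsubdiff (Fobj f g h₁ h₂ C) xs) := by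
  obtain ⟨hxsΩ, hxsC⟩ := hxs
  have hgne : g xs ≠ 0 := hxsΩ
  obtain ⟨hf0, hg0, -, -, -, -, -, hfLip, hgconv, hh2conv, hh1⟩ := hSA
  have hgpos : 0 < g xs := (hg0 xs).lt_of_ne (Ne.symm hgne)
  set c : ℝ := 1 / g xs with hc
  set A0 : ℝ := c ^ 2 * f xs with hA0
  set G1 : En n := gradient h₁ xs with hG1
  have hcpos : 0 < c := by rw [hc]; positivity
  have hA0nn : 0 ≤ A0 := by
    rw [hA0]; exact mul_nonneg (by positivity) (hf0 xs)
  have hA0eq : A0 = f xs / (g xs * g xs) := by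
    rw [hA0, hc]; ring
  obtain ⟨sf, hsf, Kf, hKf⟩ := hfLip xs hxsΩ
  have hfc : ContinuousAt f xs := hKf.continuousOn.continuousAt hsf
  have hgc : Continuous g := hgconv.locallyLipschitz.continuous
  obtain ⟨Kg, sg, hsg, hKg⟩ := hgconv.locallyLipschitz xs
  obtain ⟨δ₁, hδ₁, hgrad₁, -⟩ := hh1 xs hxsΩ
  have hH1 : HasGradientAt h₁ G1 xs := hgrad₁ xs (Metric.mem_ball_self hδ₁)
  have hKg0 : (0:ℝ) ≤ (Kg : ℝ) := Kg.coe_nonneg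
  have hevg : ∀ᶠ z in 𝓝 xs, |g z - g xs| ≤ (Kg:ℝ) * ‖z - xs‖ := by
    filter_upwards [hsg] with z hz
    have := hKg.dist_le_mul z hz xs (mem_of_mem_nhds hsg)
    rwa [Real.dist_eq, dist_eq_norm] at this
  have hevgpos : ∀ᶠ z in 𝓝 xs, 0 < g z :=
    hgc.continuousAt.eventually (eventually_gt_nhds hgpos)
  have hAcont : ContinuousAt (fun z => f z / (g xs * g z)) xs :=
    hfc.div (continuousAt_const.mul hgc.continuousAt) (by positivity)
  have hevA : ∀ ε₂ : ℝ, 0 < ε₂ → ∀ᶠ z in 𝓝 xs, |f z / (g xs * g z) - A0| ≤ ε₂ := by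
    intro ε₂ hε₂
    have hev : ∀ᶠ y in 𝓝 (f xs / (g xs * g xs)), |y - f xs / (g xs * g xs)| ≤ ε₂ := by
      filter_upwards [Metric.closedBall_mem_nhds (f xs / (g xs * g xs)) hε₂] with y hy
      simpa [Real.dist_eq] using Metric.mem_closedBall.mp hy
    filter_upwards [hAcont.eventually hev] with z hz
    rw [hA0eq]; exact hz
  have hcfxs : c * f xs = f xs / g xs := by rw [hc]; ring
  constructor
  · rintro ⟨hFne, hF⟩
    obtain ⟨yg, hyg⟩ := exists_convSubdiff hgconv xs
    obtain ⟨zh, hzh⟩ := exists_convSubdiff hh2conv xs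
    refine ⟨A0 • yg - G1 + zh, ⟨?_, ?_⟩, yg, hyg, zh, hzh, by module⟩
    · simp only [if_pos hxsC]; exact EReal.coe_ne_top _
    · intro ε hε
      have hε₂pos : (0:ℝ) < ε / (4 * ((Kg:ℝ) + 1)) := by positivity
      have hF4 := hF (ε/4) (by positivity)
      have hevA' := hevA _ hε₂pos
      have hevh1 := grad_approx hH1 (show (0:ℝ) < ε/4 by positivity)
      filter_upwards [hF4, hevA', hevh1, hevg, hevgpos] with z hFz hAz h1z hgz hgzpos
      by_cases hzC : z ∈ C
      · have hzΩ : z ∈ Omeg g := hgzpos.ne'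
        simp only [if_pos hxsC, if_pos hzC]
        rw [← EReal.coe_add, EReal.coe_le_coe_iff]
        rw [Fobj_mem ⟨hxsΩ, hxsC⟩, Fobj_mem ⟨hzΩ, hzC⟩, ← EReal.coe_add,
          EReal.coe_le_coe_iff] at hFz
        simp only [inner_zero_left, zero_sub] at hFz
        have hgzne : g z ≠ 0 := hgzpos.ne'
        have hinner : (inner ℝ (A0 • yg - G1 + zh) (z - xs) : ℝ)
            = A0 * (inner ℝ yg (z - xs) : ℝ) - (inner ℝ G1 (z - xs) : ℝ)
              + (inner ℝ zh (z - xs) : ℝ) := by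
          rw [inner_add_left, inner_sub_left, real_inner_smul_left]
        have hS1 := hyg z
        have hS2 := hzh z
        have hcfz : c * f z = f z / g z + f z / (g xs * g z) * (g z - g xs) := by
          rw [hc]; field_simp; ring
        have habs : |(f z / (g xs * g z) - A0) * (g z - g xs)|
            ≤ ε / (4 * ((Kg:ℝ) + 1)) * ((Kg:ℝ) * ‖z - xs‖) := by
          rw [abs_mul]
          exact mul_le_mul hAz hgz (abs_nonneg _) hε₂pos.le
        have habs1 := (abs_le.mp habs).1
        have hN0 : (0:ℝ) ≤ ‖z - xs‖ := norm_nonneg _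
        have hbound : ε / (4 * ((Kg:ℝ) + 1)) * ((Kg:ℝ) * ‖z - xs‖) ≤ ε / 4 * ‖z - xs‖ := by
          have h1 : ε / (4 * ((Kg:ℝ) + 1)) * ((Kg:ℝ) * ‖z - xs‖)
              ≤ ε / (4 * ((Kg:ℝ) + 1)) * (((Kg:ℝ) + 1) * ‖z - xs‖) := by
            apply mul_le_mul_of_nonneg_left ?_ hε₂pos.le
            have : (Kg:ℝ) * ‖z - xs‖ ≤ ((Kg:ℝ) + 1) * ‖z - xs‖ := by nlinarith
            exact this
          have h2 : ε / (4 * ((Kg:ℝ) + 1)) * (((Kg:ℝ) + 1) * ‖z - xs‖)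
              = ε / 4 * ‖z - xs‖ := by
            have hne : (Kg:ℝ) + 1 ≠ 0 := by positivity
            field_simp
          linarith
        have hT2 : A0 * (inner ℝ yg (z - xs) : ℝ) ≤ A0 * (g z - g xs) :=
          mul_le_mul_of_nonneg_left (by linarith [hS1]) hA0nn
        have h1za := (abs_le.mp h1z).1
        have h1zb := (abs_le.mp h1z).2
        have hεN : (0:ℝ) ≤ ε * ‖z - xs‖ := mul_nonneg hε.le hN0
        have hid : f z / (g xs * g z) * (g z - g xs) - A0 * (g z - g xs)
            = (f z / (g xs * g z) - A0) * (g z - g xs) := by ring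
        linarith
      · simp only [if_neg hzC]; exact le_top
  · rintro ⟨hGg, hGh2⟩ ⟨u, ⟨hune, huev⟩, yg, hyg, zh, hzh, heq⟩
    have hyg' : yg = gradient g xs := convSubdiff_eq_grad hyg hGg
    have hzh' : zh = gradient h₂ xs := convSubdiff_eq_grad hzh hGh2
    have hu : u = A0 • yg - G1 + zh := by
      have h0 : u - (A0 • yg - G1 + zh) = 0 := by
        rw [show u - (A0 • yg - G1 + zh) = u - A0 • yg + G1 - zh from by module]
        exact heq.symm
      exact sub_eq_zero.mp h0
    refine ⟨by rw [Fobj_mem ⟨hxsΩ, hxsC⟩]; exact EReal.coe_ne_top _, ?_⟩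
    intro ε hε
    have hA02 : (0:ℝ) < A0 + 2 := by linarith
    have hε₁pos : (0:ℝ) < ε / (4 * (A0 + 2)) := by positivity
    have hε₂pos : (0:ℝ) < ε / (4 * ((Kg:ℝ) + 1)) := by positivity
    have hu4 := huev (ε/4) (by positivity)
    have hevA' := hevA _ hε₂pos
    have hevh1 := grad_approx hH1 hε₁pos
    have hevgg := grad_approx hGg hε₁pos
    have hevh2 := grad_approx hGh2 hε₁pos
    filter_upwards [hu4, hevA', hevh1, hevgg, hevh2, hevg] with z huz hAz h1z hdg hdh2 hgz
    by_cases hzm : z ∈ Omeg g ∩ C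
    · have hgzpos : 0 < g z := (hg0 z).lt_of_ne (Ne.symm hzm.1)
      have hgzne : g z ≠ 0 := hgzpos.ne'
      simp only [if_pos hxsC, if_pos hzm.2] at huz
      rw [← EReal.coe_add, EReal.coe_le_coe_iff] at huz
      rw [Fobj_mem ⟨hxsΩ, hxsC⟩, Fobj_mem hzm, ← EReal.coe_add, EReal.coe_le_coe_iff]
      simp only [inner_zero_left, zero_sub]
      have hinner : (inner ℝ u (z - xs) : ℝ)
          = A0 * (inner ℝ yg (z - xs) : ℝ) - (inner ℝ G1 (z - xs) : ℝ)
            + (inner ℝ zh (z - xs) : ℝ) := by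
        rw [hu, inner_add_left, inner_sub_left, real_inner_smul_left]
      have hcfz : c * f z = f z / g z + f z / (g xs * g z) * (g z - g xs) := by
        rw [hc]; field_simp; ring
      have habs : |(f z / (g xs * g z) - A0) * (g z - g xs)|
          ≤ ε / (4 * ((Kg:ℝ) + 1)) * ((Kg:ℝ) * ‖z - xs‖) := by
        rw [abs_mul]
        exact mul_le_mul hAz hgz (abs_nonneg _) hε₂pos.le
      have habs2 := (abs_le.mp habs).2
      have hN0 : (0:ℝ) ≤ ‖z - xs‖ := norm_nonneg _
      have hbound : ε / (4 * ((Kg:ℝ) + 1)) * ((Kg:ℝ) * ‖z - xs‖) ≤ ε / 4 * ‖z - xs‖ := by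
        have h1 : ε / (4 * ((Kg:ℝ) + 1)) * ((Kg:ℝ) * ‖z - xs‖)
            ≤ ε / (4 * ((Kg:ℝ) + 1)) * (((Kg:ℝ) + 1) * ‖z - xs‖) := by
          apply mul_le_mul_of_nonneg_left ?_ hε₂pos.le
          nlinarith
        have h2 : ε / (4 * ((Kg:ℝ) + 1)) * (((Kg:ℝ) + 1) * ‖z - xs‖)
            = ε / 4 * ‖z - xs‖ := by
          have hne : (Kg:ℝ) + 1 ≠ 0 := by positivity
          field_simp
        linarith
      have hdgb := (abs_le.mp hdg).2
      have hdgb' : g z - g xs ≤ (inner ℝ yg (z - xs) : ℝ) + ε / (4 * (A0 + 2)) * ‖z - xs‖ := by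
        rw [hyg']; linarith [hdgb]
      have hT2 : A0 * (g z - g xs)
          ≤ A0 * ((inner ℝ yg (z - xs) : ℝ) + ε / (4 * (A0 + 2)) * ‖z - xs‖) :=
        mul_le_mul_of_nonneg_left hdgb' hA0nn
      have hε₁N : A0 * (ε / (4 * (A0 + 2)) * ‖z - xs‖) + 2 * (ε / (4 * (A0 + 2)) * ‖z - xs‖)
          = ε / 4 * ‖z - xs‖ := by
        have hne : A0 + 2 ≠ 0 := hA02.ne'
        field_simp
      have h1za := (abs_le.mp h1z).1
      have hdh2b : h₂ z - h₂ xs - (inner ℝ zh (z - xs) : ℝ)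
          ≤ ε / (4 * (A0 + 2)) * ‖z - xs‖ := by
        rw [hzh']; exact (abs_le.mp hdh2).2
      have hεN : (0:ℝ) ≤ ε * ‖z - xs‖ := mul_nonneg hε.le hN0
      have hid : f z / (g xs * g z) * (g z - g xs) - A0 * (g z - g xs)
          = (f z / (g xs * g z) - A0) * (g z - g xs) := by ring
      have hT2' : A0 * ((inner ℝ yg (z - xs) : ℝ) + ε / (4 * (A0 + 2)) * ‖z - xs‖)
          = A0 * (inner ℝ yg (z - xs) : ℝ) + A0 * (ε / (4 * (A0 + 2)) * ‖z - xs‖) := by ring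
      linarith
    · have hFz : Fobj f g h₁ h₂ C z = ⊤ := by rw [Fobj, if_neg hzm]
      rw [hFz]; exact le_top

end
end

section
/- Suppose O := {x ∈ ℝⁿ : f(x) = g(x) = 0} is nonempty. If the initial point x⁰ ∈ dom F satisfies F(x⁰) < inf{ liminf_{z→x} F(z) : x ∈ O }, then the level set X := {x ∈ dom F : F(x) ≤ F(x⁰)} is closed. -/
open Filter Topology Set
open scoped Classical

noncomputable section

variable {n : ℕ}

/-- if `O = {x : f x = 0 ∧ g x = 0}` is nonempty and the initial point
`x⁰ ∈ dom F` satisfies `F(x⁰) < inf {liminf_{z→x} F(z) : x ∈ O}`, then the level set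
`{x ∈ dom F : F(x) ≤ F(x⁰)}` is closed. -/
theorem statement5 (f g h₁ h₂ : En n → ℝ) (C : Set (En n))
    (hSA : StandingAssumptions f g h₁ h₂ C)
    (hO : {x : En n | f x = 0 ∧ g x = 0}.Nonempty)
    (x0 : En n) (hdom : Fobj f g h₁ h₂ C x0 ≠ ⊤)
    (hlt : Fobj f g h₁ h₂ C x0 <
      ⨅ x ∈ {x : En n | f x = 0 ∧ g x = 0},
        Filter.liminf (Fobj f g h₁ h₂ C) (𝓝 x)) :
    IsClosed {x : En n | Fobj f g h₁ h₂ C x ≤ Fobj f g h₁ h₂ C x0} := by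
  obtain ⟨hf0, hg0, hflsc, hglsc, hhlsc, hCcl, hne, _, hgconv, _, _⟩ := hSA
  have hgcont : Continuous g :=
    continuousOn_univ.mp (hgconv.continuousOn isOpen_univ)
  have hx0mem : x0 ∈ Omeg g ∩ C := by
    by_contra h
    exact hdom (if_neg h)
  set r0 : ℝ := f x0 / g x0 + (h₁ x0 - h₂ x0) with hr0
  have hFx0 : Fobj f g h₁ h₂ C x0 = (r0 : EReal) := if_pos hx0mem
  apply IsSeqClosed.isClosed
  intro u xb hu hlim
  -- each u k lies in Ω ∩ C
  have hmem : ∀ k, u k ∈ Omeg g ∩ C := by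
    intro k
    by_contra h
    have h2 : Fobj f g h₁ h₂ C (u k) ≤ Fobj f g h₁ h₂ C x0 := hu k
    rw [hFx0, show Fobj f g h₁ h₂ C (u k) = ⊤ from if_neg h] at h2
    exact (EReal.coe_lt_top r0).not_ge h2
  have hgu : ∀ k, 0 < g (u k) := fun k =>
    lt_of_le_of_ne (hg0 (u k)) (Ne.symm (hmem k).1)
  have hreal : ∀ k, f (u k) / g (u k) + (h₁ (u k) - h₂ (u k)) ≤ r0 := by
    intro k
    have h2 : Fobj f g h₁ h₂ C (u k) ≤ Fobj f g h₁ h₂ C x0 := hu k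
    rw [hFx0, show Fobj f g h₁ h₂ C (u k)
        = ((f (u k) / g (u k) + (h₁ (u k) - h₂ (u k)) : ℝ) : EReal)
      from if_pos (hmem k)] at h2
    exact_mod_cast h2
  have hhle : ∀ k, h₁ (u k) - h₂ (u k) ≤ r0 := fun k =>
    le_trans (le_add_of_nonneg_left (div_nonneg (hf0 _) (hg0 _))) (hreal k)
  have hkey : ∀ k, f (u k) ≤ (r0 - (h₁ (u k) - h₂ (u k))) * g (u k) := by
    intro k
    have h1 : f (u k) / g (u k) ≤ r0 - (h₁ (u k) - h₂ (u k)) := by linarith [hreal k]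
    exact (div_le_iff₀ (hgu k)).1 h1
  have hxbC : xb ∈ C := hCcl.mem_of_tendsto hlim (Filter.Eventually.of_forall fun k => (hmem k).2)
  have hgtend : Tendsto (fun k => g (u k)) atTop (𝓝 (g xb)) :=
    (hgcont.tendsto xb).comp hlim
  -- the key limit inequality
  have claim : f xb ≤ (r0 - (h₁ xb - h₂ xb)) * g xb := by
    by_contra hcl
    push_neg at hcl
    obtain ⟨c, htc, hcf⟩ := exists_between hcl
    have hcont : ContinuousAt (fun δ : ℝ => (r0 - (h₁ xb - h₂ xb) + δ) * (g xb + δ)) 0 := by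
      fun_prop
    have h00 : (fun δ : ℝ => (r0 - (h₁ xb - h₂ xb) + δ) * (g xb + δ)) 0 < c := by
      simpa using htc
    have hev : ∀ᶠ δ in 𝓝 (0 : ℝ), (r0 - (h₁ xb - h₂ xb) + δ) * (g xb + δ) < c :=
      (tendsto_order.1 hcont.tendsto).2 c h00
    have hev' : ∀ᶠ δ in 𝓝[>] (0 : ℝ), (r0 - (h₁ xb - h₂ xb) + δ) * (g xb + δ) < c :=
      eventually_nhdsWithin_of_eventually_nhds hev
    obtain ⟨δ, hδlt, hδmem⟩ := (hev'.and self_mem_nhdsWithin).exists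
    have hδpos : (0 : ℝ) < δ := hδmem
    have E1 : ∀ᶠ k in atTop, c < f (u k) := hlim.eventually (hflsc xb c hcf)
    have E2 : ∀ᶠ k in atTop, (h₁ xb - h₂ xb) - δ < h₁ (u k) - h₂ (u k) :=
      hlim.eventually (hhlsc xb ((h₁ xb - h₂ xb) - δ)
        (show (h₁ xb - h₂ xb) - δ < h₁ xb - h₂ xb by linarith))
    have E3 : ∀ᶠ k in atTop, g (u k) < g xb + δ := by
      have hgxb : 0 ≤ g xb := hg0 xb
      exact hgtend.eventually (Filter.Tendsto.eventually_lt_const (by linarith) tendsto_id)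
    obtain ⟨k, hk1, hk2, hk3⟩ := (E1.and (E2.and E3)).exists
    have hb1 : 0 ≤ r0 - (h₁ (u k) - h₂ (u k)) := by linarith [hhle k]
    have hb2 : r0 - (h₁ (u k) - h₂ (u k)) ≤ r0 - (h₁ xb - h₂ xb) + δ := by linarith
    have hmul : (r0 - (h₁ (u k) - h₂ (u k))) * g (u k)
        ≤ (r0 - (h₁ xb - h₂ xb) + δ) * (g xb + δ) :=
      mul_le_mul hb2 (le_of_lt hk3) (hg0 _) (le_trans hb1 hb2)
    linarith [hkey k]
  by_cases hgxb : g xb = 0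
  · -- then f xb = 0, so xb ∈ O, contradicting hlt
    exfalso
    have hfxb : f xb = 0 := le_antisymm (by simpa [hgxb] using claim) (hf0 xb)
    have hxbO : xb ∈ {x : En n | f x = 0 ∧ g x = 0} := ⟨hfxb, hgxb⟩
    have h1 : (⨅ x ∈ {x : En n | f x = 0 ∧ g x = 0},
        Filter.liminf (Fobj f g h₁ h₂ C) (𝓝 x)) ≤
        Filter.liminf (Fobj f g h₁ h₂ C) (𝓝 xb) := biInf_le _ hxbO
    have h2 : Filter.liminf (Fobj f g h₁ h₂ C) (𝓝 xb) ≤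
        Filter.liminf (fun k => Fobj f g h₁ h₂ C (u k)) atTop := by
      have h := liminf_le_liminf_of_le (u := Fobj f g h₁ h₂ C) hlim
      exact h.trans_eq (Filter.liminf_comp _ _ _).symm
    have h3 : Filter.liminf (fun k => Fobj f g h₁ h₂ C (u k)) atTop ≤ (r0 : EReal) := by
      have h := liminf_le_liminf (f := atTop)
        (u := fun k => Fobj f g h₁ h₂ C (u k)) (v := fun _ : ℕ => (r0 : EReal))
        (Filter.Eventually.of_forall fun k => (hFx0 ▸ (hu k : Fobj f g h₁ h₂ C (u k) ≤ Fobj f g h₁ h₂ C x0)))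
      simpa [liminf_const] using h
    rw [hFx0] at hlt
    exact absurd (le_trans h1 (le_trans h2 h3)) (not_le.mpr hlt)
  · -- g xb > 0 : show F xb ≤ r0
    have hgpos : 0 < g xb := lt_of_le_of_ne (hg0 xb) (Ne.symm hgxb)
    have hxbmem : xb ∈ Omeg g ∩ C := ⟨hgxb, hxbC⟩
    have hfin : f xb / g xb + (h₁ xb - h₂ xb) ≤ r0 := by
      have := (div_le_iff₀ hgpos).2 claim
      linarith
    show Fobj f g h₁ h₂ C xb ≤ Fobj f g h₁ h₂ C x0
    rw [hFx0, show Fobj f g h₁ h₂ C xb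
        = ((f xb / g xb + (h₁ xb - h₂ xb) : ℝ) : EReal) from if_pos hxbmem]
    exact_mod_cast hfin
end
end

section
/- Suppose the level set X := {x ∈ dom F : F(x) ≤ F(x⁰)} is compact, and let {(x^k, y^k, z^k, c_k)} be generated by AMPDA. Then: (i) the sequence {(x^k, y^k, z^k, c_k)} is bounded; (ii) the sequence {F(x^k)} is monotonically nonincreasing with F_∞ := inf_k F(x^k) = lim_{k→∞} F(x^k) finite, and ‖x^{k+1} − x^k‖ → 0 as k → ∞. -/
open Filter Topology Set
open scoped Classical

noncomputable section

variable {n : ℕ}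

lemma lsc_bddBelow_compact {f : En n → ℝ} (hf : LowerSemicontinuous f)
    {s : Set (En n)} (hs : IsCompact s) : ∃ m : ℝ, ∀ x ∈ s, m ≤ f x := by
  have hU : ∀ m : ℕ, IsOpen {x : En n | -(m:ℝ) < f x} := fun m => hf.isOpen_preimage _
  have hcov : s ⊆ ⋃ m : ℕ, {x : En n | -(m:ℝ) < f x} := by
    intro x _
    obtain ⟨m, hm⟩ := exists_nat_gt (-(f x))
    exact mem_iUnion.2 ⟨m, by simp only [mem_setOf_eq]; linarith⟩
  have hdir : Directed (· ⊆ ·) (fun m : ℕ => {x : En n | -(m:ℝ) < f x}) := by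
    apply Monotone.directed_le
    intro a b hab x hx
    simp only [mem_setOf_eq] at *
    have : (a:ℝ) ≤ b := Nat.cast_le.2 hab
    linarith
  obtain ⟨m, hm⟩ := hs.elim_directed_cover _ hU hcov hdir
  exact ⟨-(m:ℝ), fun x hx => le_of_lt (hm hx)⟩

lemma conjF_of_mem {φ : En n → ℝ} {x y : En n} (h : y ∈ convSubdiff φ x) :
    conjF φ y = (((inner ℝ x y : ℝ) - φ x : ℝ) : EReal) := by
  refine le_antisymm (iSup_le fun z => ?_)
    (le_iSup (fun z => (((inner ℝ z y : ℝ) - φ z : ℝ) : EReal)) x)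
  have h' := h z
  rw [EReal.coe_le_coe_iff]
  have hi : (inner ℝ y (z - x) : ℝ) = (inner ℝ z y : ℝ) - (inner ℝ x y : ℝ) := by
    rw [inner_sub_right, real_inner_comm y z, real_inner_comm y x]
  linarith

lemma subgrad_bound {φ : En n → ℝ} (hconv : ConvexOn ℝ univ φ)
    {s : Set (En n)} (hs : IsCompact s) :
    ∃ B : ℝ, ∀ x ∈ s, ∀ y ∈ convSubdiff φ x, ‖y‖ ≤ B := by
  rcases s.eq_empty_or_nonempty with h | hne
  · exact ⟨0, by simp [h]⟩
  have hcont : Continuous φ := by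
    rw [← continuousOn_univ]
    exact hconv.continuousOn isOpen_univ
  have hK : IsCompact (Metric.cthickening 1 s) := hs.cthickening
  have hKne : (Metric.cthickening 1 s).Nonempty :=
    hne.mono (Metric.self_subset_cthickening s)
  obtain ⟨xM, hxM, hM⟩ := hK.exists_isMaxOn hKne hcont.continuousOn
  obtain ⟨xm, hxm, hm⟩ := hs.exists_isMinOn hne hcont.continuousOn
  refine ⟨max 0 (φ xM - φ xm), ?_⟩
  intro x hx y hy
  rcases eq_or_ne y 0 with rfl | hy0
  · simp
  have hyn : 0 < ‖y‖ := norm_pos_iff.mpr hy0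
  have hKx : x + ‖y‖⁻¹ • y ∈ Metric.cthickening 1 s := by
    apply Metric.closedBall_subset_cthickening hx
    simp [Metric.mem_closedBall, dist_eq_norm, norm_smul, abs_of_pos (inv_pos.2 hyn),
      inv_mul_cancel₀ (ne_of_gt hyn)]
  have hsub := hy (x + ‖y‖⁻¹ • y)
  have hin : (inner ℝ y ((x + ‖y‖⁻¹ • y) - x) : ℝ) = ‖y‖ := by
    rw [add_sub_cancel_left, real_inner_smul_right, real_inner_self_eq_norm_sq]
    field_simp
  rw [hin] at hsub
  have h1 : φ (x + ‖y‖⁻¹ • y) ≤ φ xM := hM hKx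
  have h2 : φ xm ≤ φ x := hm hx
  have : ‖y‖ ≤ φ xM - φ xm := by linarith
  exact this.trans (le_max_right _ _)

lemma F_le_Q (f g h₁ h₂ : En n → ℝ) (C : Set (En n))
    (hf0 : ∀ x, 0 ≤ f x) (hg0 : ∀ x, 0 ≤ g x)
    {x x' x'' y z : En n} (hx : x ∈ Omeg g ∩ C)
    (hy : y ∈ convSubdiff g x') (hz : z ∈ convSubdiff h₂ x'') :
    Fobj f g h₁ h₂ C x ≤ Qaux f g h₁ h₂ C x y z (1 / g x) := by
  have hgy := conjF_of_mem hy
  have hhz := conjF_of_mem hz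
  have hcond : x ∈ C ∧ conjF g y ≠ ⊤ ∧ conjF h₂ z ≠ ⊤ :=
    ⟨hx.2, by rw [hgy]; exact EReal.coe_ne_top _, by rw [hhz]; exact EReal.coe_ne_top _⟩
  rw [Fobj, if_pos hx, Qaux, if_pos hcond, hgy, hhz, EReal.toReal_coe, EReal.toReal_coe,
    EReal.coe_le_coe_iff]
  set c : ℝ := 1 / g x with hc
  have hgx : 0 < g x := lt_of_le_of_ne (hg0 x) (Ne.symm hx.1)
  have hcg : c * g x = 1 := by rw [hc, one_div, inv_mul_cancel₀ (ne_of_gt hgx)]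
  have hc0 : 0 ≤ c := le_of_lt (by positivity)
  have hfd : f x / g x = c * f x := by rw [hc]; ring
  have hFY1 : (inner ℝ x y : ℝ) - g x ≤ (inner ℝ x' y : ℝ) - g x' := by
    have h' := hy x
    have hi : (inner ℝ y (x - x') : ℝ) = (inner ℝ x y : ℝ) - (inner ℝ x' y : ℝ) := by
      rw [inner_sub_right, real_inner_comm y x, real_inner_comm y x']
    linarith
  have hFY2 : (inner ℝ x z : ℝ) - h₂ x ≤ (inner ℝ x'' z : ℝ) - h₂ x'' := by
    have h' := hz x
    have hi : (inner ℝ z (x - x'') : ℝ) = (inner ℝ x z : ℝ) - (inner ℝ x'' z : ℝ) := by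
      rw [inner_sub_right, real_inner_comm z x, real_inner_comm z x'']
    linarith
  have key : -(c * f x) ≤ c ^ 2 * f x * (((inner ℝ x' y : ℝ) - g x') - (inner ℝ x y : ℝ)) := by
    have h1 : -(g x) ≤ ((inner ℝ x' y : ℝ) - g x') - (inner ℝ x y : ℝ) := by linarith
    have h2 : 0 ≤ c ^ 2 * f x := mul_nonneg (sq_nonneg c) (hf0 x)
    have h3 := mul_le_mul_of_nonneg_left h1 h2
    have h4 : c ^ 2 * f x * (-(g x)) = -(c * f x) := by
      linear_combination (-(c * f x)) * hcg
    linarith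
  rw [hfd]
  linarith

/-- under compactness of the level set, the AMPDA sequence
`(x^k, y^k, z^k, c_k)` is bounded, `F(x^k)` is nonincreasing and converges to the finite
limit `F_∞ = inf_k F(x^k)`, and `‖x^{k+1} - x^k‖ → 0`. -/
theorem statement8 (f g h₁ h₂ : En n → ℝ) (C : Set (En n))
    (hSA : StandingAssumptions f g h₁ h₂ C)
    (x0 : En n) (hx0 : x0 ∈ Omeg g ∩ C)
    (αlo αhi σ γ : ℝ) (hαlo : 0 < αlo) (hαhi : αlo ≤ αhi)
    (hσ : 0 < σ) (hγ0 : 0 < γ) (hγ1 : γ < 1)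
    (hcomp : IsCompact {x : En n | Fobj f g h₁ h₂ C x ≤ Fobj f g h₁ h₂ C x0})
    (A : AMPDA f g h₁ h₂ C x0 αlo αhi σ γ) :
    (∃ M : ℝ, ∀ k : ℕ, ‖A.x k‖ ≤ M ∧ ‖A.y k‖ ≤ M ∧ ‖A.z k‖ ≤ M ∧ |A.c k| ≤ M) ∧
    (∀ k : ℕ, Fobj f g h₁ h₂ C (A.x (k + 1)) ≤ Fobj f g h₁ h₂ C (A.x k)) ∧
    (∃ Finf : ℝ,
      Tendsto (fun k => Fobj f g h₁ h₂ C (A.x k)) atTop (𝓝 ((Finf : ℝ) : EReal)) ∧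
      ((Finf : ℝ) : EReal) = ⨅ k : ℕ, Fobj f g h₁ h₂ C (A.x k)) ∧
    Tendsto (fun k => ‖A.x (k + 1) - A.x k‖) atTop (𝓝 0) := by
  obtain ⟨hf0, hg0, -, -, hhlsc, -, -, -, hgconv, hh2conv, -⟩ := hSA
  have hmemk : ∀ k, A.x k ∈ Omeg g ∩ C := by
    intro k
    induction k with
    | zero => rw [A.hx0]; exact hx0
    | succ k ih =>
      refine ⟨A.hmem k, ?_⟩
      have hacc := A.haccept k
      by_contra hC'
      have hQ : Qaux f g h₁ h₂ C (A.x (k+1)) (A.y k) (A.z k) (1 / g (A.x (k+1))) = ⊤ := by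
        rw [Qaux, if_neg]; tauto
      rw [hQ, EReal.top_add_coe, Fobj, if_pos ih, top_le_iff] at hacc
      exact EReal.coe_ne_top _ hacc
  set φ : ℕ → ℝ := fun k => f (A.x k) / g (A.x k) + (h₁ (A.x k) - h₂ (A.x k)) with hφ
  have hF : ∀ k, Fobj f g h₁ h₂ C (A.x k) = ((φ k : ℝ) : EReal) := fun k => by
    simp only [Fobj, if_pos (hmemk k), hφ]
  have hdesc : ∀ k, φ (k+1) + σ/2 * ‖A.x (k+1) - A.x k‖^2 ≤ φ k := by
    intro k
    have h1 := F_le_Q f g h₁ h₂ C hf0 hg0 (hmemk (k+1)) (A.hy k) (A.hz k)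
    have h2 := A.haccept k
    have h3 : ((φ (k+1) : ℝ) : EReal) + ((σ/2 * ‖A.x (k+1) - A.x k‖^2 : ℝ) : EReal)
        ≤ ((φ k : ℝ) : EReal) := by
      rw [← hF (k+1), ← hF k]
      exact le_trans (add_le_add_left h1 _) h2
    rw [← EReal.coe_add, EReal.coe_le_coe_iff] at h3
    exact h3
  have hs2 : ∀ k, 0 ≤ σ/2 * ‖A.x (k+1) - A.x k‖^2 := fun k =>
    mul_nonneg (by linarith) (sq_nonneg _)
  have hanti : Antitone φ := antitone_nat_of_succ_le fun k =>
    le_trans (le_add_of_nonneg_right (hs2 k)) (hdesc k)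
  have hXk : ∀ k, A.x k ∈ {x : En n | Fobj f g h₁ h₂ C x ≤ Fobj f g h₁ h₂ C x0} := by
    intro k
    show Fobj f g h₁ h₂ C (A.x k) ≤ Fobj f g h₁ h₂ C x0
    rw [hF k, ← A.hx0, hF 0, EReal.coe_le_coe_iff]
    exact hanti (Nat.zero_le k)
  obtain ⟨M1, hM1⟩ := isBounded_iff_forall_norm_le.mp hcomp.isBounded
  obtain ⟨m, hm⟩ := lsc_bddBelow_compact hhlsc hcomp
  have hφlb : ∀ k, m ≤ φ k := fun k => by
    have h1 : 0 ≤ f (A.x k) / g (A.x k) := div_nonneg (hf0 _) (hg0 _)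
    have h2 := hm _ (hXk k)
    simp only [hφ]
    linarith
  have hbdd : BddBelow (Set.range φ) := ⟨m, by rintro _ ⟨k, rfl⟩; exact hφlb k⟩
  have htend : Tendsto φ atTop (𝓝 (⨅ k, φ k)) := tendsto_atTop_ciInf hanti hbdd
  obtain ⟨By, hBy⟩ := subgrad_bound hgconv hcomp
  obtain ⟨Bz, hBz⟩ := subgrad_bound hh2conv hcomp
  have hgc : Continuous g := by
    rw [← continuousOn_univ]
    exact hgconv.continuousOn isOpen_univ
  obtain ⟨xg, hxg, hxgmin⟩ := hcomp.exists_isMinOn ⟨A.x 0, hXk 0⟩ hgc.continuousOn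
  have hxgmem : xg ∈ Omeg g ∩ C := by
    by_contra h
    have h1 : Fobj f g h₁ h₂ C xg = ⊤ := by simp only [Fobj, if_neg h]
    have h2 := hxg
    simp only [mem_setOf_eq, h1] at h2
    rw [← A.hx0, hF 0, top_le_iff] at h2
    exact EReal.coe_ne_top _ h2
  have hgxg : 0 < g xg := lt_of_le_of_ne (hg0 xg) (Ne.symm hxgmem.1)
  have hck : ∀ k, |A.c k| ≤ 1 / g xg := by
    intro k
    have h1 : 0 < g (A.x k) := lt_of_le_of_ne (hg0 _) (Ne.symm (hmemk k).1)
    rw [A.hc k, abs_of_pos (by positivity)]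
    exact one_div_le_one_div_of_le hgxg (hxgmin (hXk k))
  have hcoe : Tendsto (fun k => Fobj f g h₁ h₂ C (A.x k)) atTop
      (𝓝 (((⨅ k, φ k : ℝ) : EReal))) := by
    have h1 : Tendsto (fun k => ((φ k : ℝ) : EReal)) atTop (𝓝 (((⨅ k, φ k : ℝ) : EReal))) :=
      EReal.tendsto_coe.mpr htend
    exact h1.congr fun k => (hF k).symm
  refine ⟨⟨max (max M1 By) (max Bz (1 / g xg)), fun k => ⟨?_, ?_, ?_, ?_⟩⟩, ?_, ?_, ?_⟩
  · exact le_trans (hM1 _ (hXk k)) (le_trans (le_max_left _ _) (le_max_left _ _))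
  · exact le_trans (hBy _ (hXk k) _ (A.hy k)) (le_trans (le_max_right _ _) (le_max_left _ _))
  · exact le_trans (hBz _ (hXk k) _ (A.hz k)) (le_trans (le_max_left _ _) (le_max_right _ _))
  · exact le_trans (hck k) (le_trans (le_max_right _ _) (le_max_right _ _))
  · intro k
    rw [hF k, hF (k+1), EReal.coe_le_coe_iff]
    exact hanti (Nat.le_succ k)
  · refine ⟨⨅ k, φ k, hcoe, ?_⟩
    have h1 : Tendsto (fun k => Fobj f g h₁ h₂ C (A.x k)) atTop
        (𝓝 (⨅ k, Fobj f g h₁ h₂ C (A.x k))) := by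
      apply tendsto_atTop_iInf
      intro a b hab
      show Fobj f g h₁ h₂ C (A.x b) ≤ Fobj f g h₁ h₂ C (A.x a)
      rw [hF a, hF b, EReal.coe_le_coe_iff]
      exact hanti hab
    exact tendsto_nhds_unique hcoe h1
  · have hsub : Tendsto (fun k => φ k - φ (k+1)) atTop (𝓝 0) := by
      have h2 : Tendsto (fun k => φ (k+1)) atTop (𝓝 (⨅ k, φ k)) :=
        htend.comp (tendsto_add_atTop_nat 1)
      simpa using htend.sub h2
    have hsq : Tendsto (fun k => ‖A.x (k+1) - A.x k‖^2) atTop (𝓝 0) := by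
      refine squeeze_zero (fun k => sq_nonneg _) (fun k => ?_)
        (by simpa using hsub.const_mul (2/σ))
      have hd : σ/2 * ‖A.x (k+1) - A.x k‖^2 ≤ φ k - φ (k+1) := by linarith [hdesc k]
      have h3 := mul_le_mul_of_nonneg_left hd (le_of_lt (show (0:ℝ) < 2/σ by positivity))
      calc ‖A.x (k+1) - A.x k‖^2 = 2/σ * (σ/2 * ‖A.x (k+1) - A.x k‖^2) := by field_simp
        _ ≤ 2/σ * (φ k - φ (k+1)) := h3
    have h4 : Tendsto (fun k => Real.sqrt (‖A.x (k+1) - A.x k‖^2)) atTop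
        (𝓝 (Real.sqrt 0)) := (Real.continuous_sqrt.tendsto 0).comp hsq
    rw [Real.sqrt_zero] at h4
    exact h4.congr fun k => Real.sqrt_sq (norm_nonneg _)

end
end

section
/- Suppose the level set X := {x ∈ dom F : F(x) ≤ F(x⁰)} is compact, and let {x^k} be generated by AMPDA with F_∞ := lim_{k→∞} F(x^k). Then for every ε > 0 there exists an index k̂ ≤ K := 2(F(x⁰) − F_∞)/(σ ε²) such that x^{k̂} is an ε-critical point of F; i.e., AMPDA finds an ε-critical point within O(ε⁻²) iterations. -/
open Filter Topology Set
open scoped Classical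

noncomputable section

variable {n : ℕ}

/-- iteration complexity of AMPDA: for every `ε > 0` there is an index
`k̂ ≤ K = 2 (F(x⁰) - F_∞) / (σ ε²)` such that `x^{k̂}` is an `ε`-critical point of `F`. -/
theorem statement9 (f g h₁ h₂ : En n → ℝ) (C : Set (En n))
    (hSA : StandingAssumptions f g h₁ h₂ C)
    (x0 : En n) (hx0 : x0 ∈ Omeg g ∩ C)
    (αlo αhi σ γ : ℝ) (hαlo : 0 < αlo) (hαhi : αlo ≤ αhi)
    (hσ : 0 < σ) (hγ0 : 0 < γ) (hγ1 : γ < 1)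
    (hcomp : IsCompact {x : En n | Fobj f g h₁ h₂ C x ≤ Fobj f g h₁ h₂ C x0})
    (A : AMPDA f g h₁ h₂ C x0 αlo αhi σ γ)
    (Finf : ℝ)
    (hFinf : Tendsto (fun k => Fobj f g h₁ h₂ C (A.x k)) atTop (𝓝 ((Finf : ℝ) : EReal))) :
    ∀ ε : ℝ, 0 < ε → ∃ khat : ℕ,
      (khat : ℝ) ≤ 2 * ((f x0 / g x0 + (h₁ x0 - h₂ x0)) - Finf) / (σ * ε ^ 2) ∧
      epsCrit f g h₁ h₂ C ε (A.x khat) := by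
  obtain ⟨hf0, hg0, -, -, -, -, -, -, -, -, -⟩ := hSA
  set φ : ℕ → ℝ := fun k => f (A.x k) / g (A.x k) + (h₁ (A.x k) - h₂ (A.x k)) with hφ
  clear_value φ
  have step : ∀ k, A.x k ∈ Omeg g ∩ C →
      A.x (k+1) ∈ Omeg g ∩ C ∧
      φ (k+1) + σ/2 * ‖A.x (k+1) - A.x k‖^2 ≤ φ k := by
    intro k hk
    have hΩ : A.x (k+1) ∈ Omeg g := A.hmem k
    have hacc := A.haccept k
    have hFk : Fobj f g h₁ h₂ C (A.x k) = ((φ k : ℝ) : EReal) := by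
      simp [Fobj, hk, hφ]
    rw [hFk] at hacc
    simp only [Qaux] at hacc
    split_ifs at hacc with hcond
    · obtain ⟨hC, hgy, hhz⟩ := hcond
      rw [← EReal.coe_add] at hacc
      replace hacc := EReal.coe_le_coe_iff.mp hacc
      have hgx' : g (A.x (k+1)) ≠ 0 := hΩ
      have hGb : (inner ℝ (A.x (k+1)) (A.y k) : ℝ) - g (A.x (k+1))
          ≤ (conjF g (A.y k)).toReal := by
        have h1 : (((inner ℝ (A.x (k+1)) (A.y k) : ℝ) - g (A.x (k+1)) : ℝ) : EReal)
            ≤ conjF g (A.y k) :=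
          le_iSup (fun x : En n => (((inner ℝ x (A.y k) : ℝ) - g x : ℝ) : EReal)) (A.x (k+1))
        have h2 := EReal.toReal_le_toReal h1 (EReal.coe_ne_bot _) hgy
        rwa [EReal.toReal_coe] at h2
      have hHb : (inner ℝ (A.x (k+1)) (A.z k) : ℝ) - h₂ (A.x (k+1))
          ≤ (conjF h₂ (A.z k)).toReal := by
        have h1 : (((inner ℝ (A.x (k+1)) (A.z k) : ℝ) - h₂ (A.x (k+1)) : ℝ) : EReal)
            ≤ conjF h₂ (A.z k) :=
          le_iSup (fun x : En n => (((inner ℝ x (A.z k) : ℝ) - h₂ x : ℝ) : EReal)) (A.x (k+1))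
        have h2 := EReal.toReal_le_toReal h1 (EReal.coe_ne_bot _) hhz
        rwa [EReal.toReal_coe] at h2
      refine ⟨⟨hΩ, hC⟩, ?_⟩
      have hfpos := hf0 (A.x (k+1))
      have hid : 2 * (1 / g (A.x (k+1))) * f (A.x (k+1))
          - (1 / g (A.x (k+1)))^2 * f (A.x (k+1)) * g (A.x (k+1))
          = f (A.x (k+1)) / g (A.x (k+1)) := by
        field_simp
        ring
      have k1 : 0 ≤ (1 / g (A.x (k+1)))^2 * f (A.x (k+1)) *
          ((conjF g (A.y k)).toReal - (inner ℝ (A.x (k+1)) (A.y k) : ℝ) + g (A.x (k+1))) :=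
        mul_nonneg (mul_nonneg (sq_nonneg _) hfpos) (by linarith)
      have k2 : 0 ≤ (conjF h₂ (A.z k)).toReal - (inner ℝ (A.x (k+1)) (A.z k) : ℝ)
          + h₂ (A.x (k+1)) := by linarith
      simp only [hφ]
      simp only [hφ] at hacc
      nlinarith [hacc, k1, k2, hid]
    · exfalso
      rw [EReal.top_add_of_ne_bot (EReal.coe_ne_bot _)] at hacc
      exact (EReal.coe_lt_top (φ k)).not_ge hacc
  have hmemC : ∀ k, A.x k ∈ Omeg g ∩ C := by
    intro k
    induction k with
    | zero => rw [A.hx0]; exact hx0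
    | succ k ih => exact (step k ih).1
  have hdesc : ∀ k, φ (k+1) + σ/2 * ‖A.x (k+1) - A.x k‖^2 ≤ φ k :=
    fun k => (step k (hmemC k)).2
  have hA : Antitone φ := antitone_nat_of_succ_le (fun k => by
    have h1 := hdesc k
    have h2 : 0 ≤ σ/2 * ‖A.x (k+1) - A.x k‖^2 := by positivity
    exact le_trans (le_add_of_nonneg_right h2) h1)
  have hFeq : ∀ k, Fobj f g h₁ h₂ C (A.x k) = ((φ k : ℝ) : EReal) := fun k => by
    simp [Fobj, hmemC k, hφ]
  have hφtend : Tendsto φ atTop (𝓝 Finf) := by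
    apply EReal.tendsto_coe.mp
    have := hFinf
    simp only [hFeq] at this
    exact this
  have hlb : ∀ k, Finf ≤ φ k := fun k =>
    le_of_tendsto hφtend (eventually_atTop.2 ⟨k, fun n hn => hA hn⟩)
  have hsum : ∀ N, σ/2 * ∑ k ∈ Finset.range N, ‖A.x (k+1) - A.x k‖^2 ≤ φ 0 - φ N := by
    intro N
    induction N with
    | zero => simp
    | succ N ih =>
      rw [Finset.sum_range_succ, mul_add]
      have := hdesc N
      linarith
  intro ε hε
  set K : ℝ := 2 * ((f x0 / g x0 + (h₁ x0 - h₂ x0)) - Finf) / (σ * ε ^ 2) with hK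
  have hφ0 : φ 0 = f x0 / g x0 + (h₁ x0 - h₂ x0) := by simp [hφ, A.hx0]
  have hK0 : 0 ≤ K := by
    rw [hK, ← hφ0]
    apply div_nonneg _ (by positivity)
    have := hlb 0
    linarith
  have hexists : ∃ k < ⌊K⌋₊ + 1, ‖A.x (k+1) - A.x k‖ ≤ ε := by
    by_contra hcon
    push_neg at hcon
    set N := ⌊K⌋₊ + 1 with hN
    have hsumlb : (N : ℝ) * ε ^ 2 ≤ ∑ k ∈ Finset.range N, ‖A.x (k+1) - A.x k‖^2 := by
      calc (N : ℝ) * ε ^ 2 = ∑ _k ∈ Finset.range N, ε ^ 2 := by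
            simp [mul_comm]
        _ ≤ _ := Finset.sum_le_sum (fun k hk => by
            have h1 := hcon k (Finset.mem_range.mp hk)
            nlinarith)
    have h1 := hsum N
    have h2 := hlb N
    have hσε : (0:ℝ) < σ * ε ^ 2 := by positivity
    have hKN : (N : ℝ) ≤ K := by
      rw [hK, ← hφ0, le_div_iff₀ hσε]
      have hm := mul_le_mul_of_nonneg_left hsumlb (by positivity : (0:ℝ) ≤ σ / 2)
      nlinarith [hm, h1, h2]
    have hfl := Nat.lt_floor_add_one K
    have : (N : ℝ) = (⌊K⌋₊ : ℝ) + 1 := by push_cast [hN]; ring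
    linarith
  obtain ⟨khat, hkN, hkε⟩ := hexists
  have ht := A.htrial khat (A.J khat)
  rw [A.hc khat, ← A.hstep khat] at ht
  refine ⟨khat, ?_, ?_⟩
  · have h1 : (khat : ℝ) ≤ (⌊K⌋₊ : ℝ) := by exact_mod_cast Nat.lt_succ_iff.mp hkN
    have h2 : ((⌊K⌋₊ : ℝ)) ≤ K := Nat.floor_le hK0
    linarith
  · refine ⟨(hmemC khat).1, A.αtil khat * γ ^ A.J khat, ?_, A.y khat, A.hy khat,
      A.z khat, A.hz khat, ⟨_, ht⟩, ?_⟩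
    · exact mul_pos (lt_of_lt_of_le hαlo (A.hαtil khat).1) (pow_pos hγ0 _)
    · refine le_trans (Metric.infDist_le_dist_of_mem ht) ?_
      rw [dist_eq_norm, norm_sub_rev]
      exact hkε
end
end

section
/- For every x ∈ Ω ∩ C, every (y,z) ∈ dom(g*) × dom(h₂*), and c_x = 1/g(x), it holds that F(x) = F̃(x, c_x) ≤ Q(x, y, z, c_x), with equality F(x) = Q(x, y, z, c_x) whenever (y,z) ∈ ∂g(x) × ∂h₂(x). -/
open Filter Topology Set
open scoped Classical

noncomputable section

variable {n : ℕ}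

/-- for `x ∈ Ω ∩ C`, `(y,z) ∈ dom g* × dom h₂*` and `c_x = 1/g(x)`, one has
`F(x) = F̃(x, c_x) ≤ Q(x, y, z, c_x)`, with equality when `(y,z) ∈ ∂g(x) × ∂h₂(x)`. -/
theorem statement11 (f g h₁ h₂ : En n → ℝ) (C : Set (En n))
    (hSA : StandingAssumptions f g h₁ h₂ C)
    (x y z : En n) (hx : x ∈ Omeg g ∩ C)
    (hy : conjF g y ≠ ⊤) (hz : conjF h₂ z ≠ ⊤) :
    Fobj f g h₁ h₂ C x = Ftil f g h₁ h₂ C x (1 / g x) ∧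
    Ftil f g h₁ h₂ C x (1 / g x) ≤ Qaux f g h₁ h₂ C x y z (1 / g x) ∧
    (y ∈ convSubdiff g x → z ∈ convSubdiff h₂ x →
      Fobj f g h₁ h₂ C x = Qaux f g h₁ h₂ C x y z (1 / g x)) := by
  obtain ⟨hΩ, hC⟩ := hx
  have hg : g x ≠ 0 := hΩ
  have hf : 0 ≤ f x := hSA.1 x
  have hc2f : 0 ≤ (1 / g x) ^ 2 * f x := mul_nonneg (sq_nonneg _) hf
  have hfy : (((inner ℝ x y : ℝ) - g x : ℝ) : EReal) ≤ conjF g y :=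
    le_iSup (fun w : En n => (((inner ℝ w y : ℝ) - g w : ℝ) : EReal)) x
  have hfz : (((inner ℝ x z : ℝ) - h₂ x : ℝ) : EReal) ≤ conjF h₂ z :=
    le_iSup (fun w : En n => (((inner ℝ w z : ℝ) - h₂ w : ℝ) : EReal)) x
  have hby : conjF g y ≠ ⊥ := ne_bot_of_le_ne_bot (EReal.coe_ne_bot _) hfy
  have hbz : conjF h₂ z ≠ ⊥ := ne_bot_of_le_ne_bot (EReal.coe_ne_bot _) hfz
  set a := (conjF g y).toReal with ha_def
  set b := (conjF h₂ z).toReal with hb_def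
  have hay : conjF g y = (a : EReal) := (EReal.coe_toReal hy hby).symm
  have haz : conjF h₂ z = (b : EReal) := (EReal.coe_toReal hz hbz).symm
  have ha : (inner ℝ x y : ℝ) - g x ≤ a := by
    rw [hay] at hfy; exact_mod_cast hfy
  have hb : (inner ℝ x z : ℝ) - h₂ x ≤ b := by
    rw [haz] at hfz; exact_mod_cast hfz
  have hmem : x ∈ Omeg g ∩ C := ⟨hΩ, hC⟩
  have hQcond : x ∈ C ∧ conjF g y ≠ ⊤ ∧ conjF h₂ z ≠ ⊤ := ⟨hC, hy, hz⟩
  have hFF : Fobj f g h₁ h₂ C x = Ftil f g h₁ h₂ C x (1 / g x) := by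
    rw [Fobj, Ftil, if_pos hmem, if_pos hmem]
    norm_cast
    field_simp
    ring
  refine ⟨hFF, ?_, ?_⟩
  · rw [Ftil, Qaux, if_pos hmem, if_pos hQcond]
    rw [EReal.coe_le_coe_iff]
    nlinarith [mul_nonneg hc2f (show (0:ℝ) ≤ a - (inner ℝ x y : ℝ) + g x by linarith)]
  · intro hyg hzh
    have ha' : a = (inner ℝ x y : ℝ) - g x := by
      have hle : conjF g y ≤ (((inner ℝ x y : ℝ) - g x : ℝ) : EReal) := by
        refine iSup_le fun w => ?_
        rw [EReal.coe_le_coe_iff]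
        have := hyg w
        have h2 : (inner ℝ y (w - x) : ℝ) = (inner ℝ w y : ℝ) - (inner ℝ x y : ℝ) := by
          rw [inner_sub_right, real_inner_comm y w, real_inner_comm y x]
        linarith
      rw [hay] at hle
      have := EReal.coe_le_coe_iff.mp hle
      linarith
    have hb' : b = (inner ℝ x z : ℝ) - h₂ x := by
      have hle : conjF h₂ z ≤ (((inner ℝ x z : ℝ) - h₂ x : ℝ) : EReal) := by
        refine iSup_le fun w => ?_
        rw [EReal.coe_le_coe_iff]
        have := hzh w
        have h2 : (inner ℝ z (w - x) : ℝ) = (inner ℝ w z : ℝ) - (inner ℝ x z : ℝ) := by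
          rw [inner_sub_right, real_inner_comm z w, real_inner_comm z x]
        linarith
      rw [haz] at hle
      have := EReal.coe_le_coe_iff.mp hle
      linarith
    rw [Fobj, Qaux, if_pos hmem, if_pos hQcond, ← ha_def, ← hb_def, ha', hb']
    norm_cast
    field_simp
    ring
end
end

section
/- Suppose the level set X := {x ∈ dom F : F(x) ≤ F(x⁰)} is compact, and let {(x^k, y^k, z^k, c_k)} be generated by AMPDA. Then for all k ≥ 1, Q(x^{k+1}, y^k, z^k, c_{k+1}) + (σ/2)‖x^{k+1} − x^k‖² ≤ Q(x^k, y^{k−1}, z^{k−1}, c_k). -/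
open Filter Topology Set
open scoped Classical

noncomputable section

variable {n : ℕ}

/-- If `y` is a convex subgradient of `g` at `x`, the conjugate of `g` at `y` equals
`⟨x,y⟩ - g x`. -/
lemma conj_eq_of_subdiff {g : En n → ℝ} {x y : En n} (hy : y ∈ convSubdiff g x) :
    conjF g y = ((inner ℝ x y - g x : ℝ) : EReal) := by
  apply le_antisymm
  · apply iSup_le
    intro z
    rw [EReal.coe_le_coe_iff]
    have h := hy z
    rw [inner_sub_right] at h
    have h1 : (inner ℝ z y : ℝ) = (inner ℝ y z : ℝ) := real_inner_comm _ _
    have h2 : (inner ℝ x y : ℝ) = (inner ℝ y x : ℝ) := real_inner_comm _ _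
    linarith
  · exact le_iSup (fun z : En n => ((inner ℝ z y - g z : ℝ) : EReal)) x

/-- Fenchel–Young for `conjF`. -/
lemma fenchel_young (g : En n → ℝ) (y z : En n) :
    ((inner ℝ z y - g z : ℝ) : EReal) ≤ conjF g y :=
  le_iSup (fun w : En n => ((inner ℝ w y - g w : ℝ) : EReal)) z

/-- sufficient descent of the auxiliary function `Q` along the AMPDA
iterates: for all `k ≥ 1`,
`Q(x^{k+1}, y^k, z^k, c_{k+1}) + (σ/2) ‖x^{k+1} - x^k‖² ≤ Q(x^k, y^{k-1}, z^{k-1}, c_k)`. -/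
theorem statement12 (f g h₁ h₂ : En n → ℝ) (C : Set (En n))
    (hSA : StandingAssumptions f g h₁ h₂ C)
    (x0 : En n) (hx0 : x0 ∈ Omeg g ∩ C)
    (αlo αhi σ γ : ℝ) (hαlo : 0 < αlo) (hαhi : αlo ≤ αhi)
    (hσ : 0 < σ) (hγ0 : 0 < γ) (hγ1 : γ < 1)
    (hcomp : IsCompact {x : En n | Fobj f g h₁ h₂ C x ≤ Fobj f g h₁ h₂ C x0})
    (A : AMPDA f g h₁ h₂ C x0 αlo αhi σ γ) :
    ∀ k : ℕ, 1 ≤ k →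
      Qaux f g h₁ h₂ C (A.x (k + 1)) (A.y k) (A.z k) (A.c (k + 1))
          + ((σ / 2 * ‖A.x (k + 1) - A.x k‖ ^ 2 : ℝ) : EReal)
        ≤ Qaux f g h₁ h₂ C (A.x k) (A.y (k - 1)) (A.z (k - 1)) (A.c k) := by
  intro k hk
  obtain ⟨m, rfl⟩ : ∃ m, k = m + 1 := ⟨k - 1, (Nat.succ_pred_eq_of_pos hk).symm⟩
  simp only [Nat.add_sub_cancel]
  -- the accepted point and its data
  have hc2 : A.c (m + 1 + 1) = 1 / g (A.x (m + 1 + 1)) := A.hc _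
  have hacc := A.haccept (m + 1)
  rw [hc2]
  refine le_trans hacc ?_
  -- it remains to show `F(x^{m+1}) ≤ Q(x^{m+1}, y^m, z^m, c_{m+1})`
  set xk := A.x (m + 1) with hxk
  have hΩ : xk ∈ Omeg g := A.hmem m
  have hC : xk ∈ C := by
    rw [hxk, A.hstep m]
    exact (A.htrial m (A.J m)).1
  have hgy := conj_eq_of_subdiff (A.hy m)
  have hhz := conj_eq_of_subdiff (A.hz m)
  have hgyT : conjF g (A.y m) ≠ ⊤ := by rw [hgy]; exact EReal.coe_ne_top _
  have hhzT : conjF h₂ (A.z m) ≠ ⊤ := by rw [hhz]; exact EReal.coe_ne_top _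
  have hgyR : (conjF g (A.y m)).toReal = inner ℝ (A.x m) (A.y m) - g (A.x m) := by
    rw [hgy, EReal.toReal_coe]
  have hhzR : (conjF h₂ (A.z m)).toReal = inner ℝ (A.x m) (A.z m) - h₂ (A.x m) := by
    rw [hhz, EReal.toReal_coe]
  -- Fenchel–Young at xk, using the explicit value of the conjugates
  have hFYg : (inner ℝ xk (A.y m) : ℝ) - g xk ≤ (conjF g (A.y m)).toReal := by
    have := fenchel_young g (A.y m) xk
    rw [hgy, EReal.coe_le_coe_iff] at this
    rw [hgyR]; exact this
  have hFYh : (inner ℝ xk (A.z m) : ℝ) - h₂ xk ≤ (conjF h₂ (A.z m)).toReal := by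
    have := fenchel_young h₂ (A.z m) xk
    rw [hhz, EReal.coe_le_coe_iff] at this
    rw [hhzR]; exact this
  have hg0 : 0 < g xk := lt_of_le_of_ne (hSA.2.1 xk) (Ne.symm hΩ)
  have hck : A.c (m + 1) = 1 / g xk := A.hc _
  rw [Fobj, Qaux, if_pos ⟨hΩ, hC⟩, if_pos ⟨hC, hgyT, hhzT⟩, EReal.coe_le_coe_iff]
  set c := A.c (m + 1) with hcdef
  have hc_nonneg : 0 ≤ c := by rw [hck]; positivity
  have hcg : c * g xk = 1 := by rw [hck]; field_simp
  have hf : 0 ≤ f xk := hSA.1 xk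
  have hfd : f xk / g xk = c * f xk := by
    rw [hck]; field_simp
  set G := (conjF g (A.y m)).toReal with hG
  set H := (conjF h₂ (A.z m)).toReal with hH
  have ha : -(g xk) ≤ G - (inner ℝ xk (A.y m) : ℝ) := by linarith
  have hb : -(h₂ xk) ≤ H - (inner ℝ xk (A.z m) : ℝ) := by linarith
  have hkey : 0 ≤ 1 + c * (G - (inner ℝ xk (A.y m) : ℝ)) := by
    have := mul_le_mul_of_nonneg_left ha hc_nonneg
    nlinarith
  have hmain : 0 ≤ c * f xk * (1 + c * (G - (inner ℝ xk (A.y m) : ℝ))) :=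
    mul_nonneg (mul_nonneg hc_nonneg hf) hkey
  nlinarith [hmain, hb, hfd]
end
end

section
/- Let φ_l, φ_c, φ_r : ℝⁿ → (−∞,+∞] and define Φ : ℝⁿ → (−∞,+∞] by Φ(x) = φ_l(x)·(φ_c(x) + φ_r(x)) for x ∈ dom(φ_l) ∩ dom(φ_c) ∩ dom(φ_r) and Φ(x) = +∞ otherwise. Let x̄ ∈ dom(φ_l) ∩ dom(φ_c) ∩ dom(φ_r), and assume: (i) φ_l is nonnegative and locally Lipschitz continuous around x̄ relative to dom(φ_l); (ii) φ_c is convex with ∂φ_c(x̄) ≠ ∅; (iii) φ_r is continuous at x̄ relative to dom(φ_r). Then ∂̂Φ(x̄) ⊇ ∂̂ψ(x̄) + φ_l(x̄)·∂φ_c(x̄), where ψ(x) := (φ_c + φ_r)(x̄)·φ_l(x) + φ_l(x̄)·φ_r(x) for x ∈ dom(φ_l) ∩ dom(φ_r) and ψ(x) := +∞ otherwise. -/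
open Filter Topology Set
open scoped Classical

noncomputable section

variable {n : ℕ}

/-- The product function `Φ(x) = φ_l(x) (φ_c(x) + φ_r(x))` on the intersection of the
domains, and `+∞` outside. -/
def PhiProd (φl φc φr : En n → EReal) (x : En n) : EReal :=
  if φl x ≠ ⊤ ∧ φc x ≠ ⊤ ∧ φr x ≠ ⊤ then
    (((φl x).toReal * ((φc x).toReal + (φr x).toReal) : ℝ) : EReal) else ⊤

/-- The function `ψ(x) = (φ_c + φ_r)(x̄) φ_l(x) + φ_l(x̄) φ_r(x)` on
`dom φ_l ∩ dom φ_r`, and `+∞` outside. -/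
def PsiProd (φl φc φr : En n → EReal) (xb x : En n) : EReal :=
  if φl x ≠ ⊤ ∧ φr x ≠ ⊤ then
    ((((φc xb).toReal + (φr xb).toReal) * (φl x).toReal
        + (φl xb).toReal * (φr x).toReal : ℝ) : EReal) else ⊤

/-- generalized product rule for the Fréchet subdifferential:
`∂̂Φ(x̄) ⊇ ∂̂ψ(x̄) + φ_l(x̄) ∂φ_c(x̄)`. -/
theorem statement15 (φl φc φr : En n → EReal) (xb : En n)
    (hbotl : ∀ x, φl x ≠ ⊥) (hbotc : ∀ x, φc x ≠ ⊥) (hbotr : ∀ x, φr x ≠ ⊥)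
    (hdoml : φl xb ≠ ⊤) (hdomc : φc xb ≠ ⊤) (hdomr : φr xb ≠ ⊤)
    (hl0 : ∀ x, 0 ≤ φl x)
    (hlLip : ∃ δ > (0 : ℝ), ∃ L : ℝ, ∀ u v : En n, ‖u - xb‖ < δ → ‖v - xb‖ < δ →
        φl u ≠ ⊤ → φl v ≠ ⊤ → |(φl u).toReal - (φl v).toReal| ≤ L * ‖u - v‖)
    (hcconv : ∀ u v : En n, ∀ t : ℝ, 0 ≤ t → t ≤ 1 →
        φc (t • u + (1 - t) • v) ≤ ((t : ℝ) : EReal) * φc u + (((1 - t : ℝ)) : EReal) * φc v)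
    (hcsub : (eSubdiff φc xb).Nonempty)
    (hrcont : ∀ ε : ℝ, 0 < ε → ∃ δ > (0 : ℝ), ∀ z : En n, ‖z - xb‖ < δ → φr z ≠ ⊤ →
        |(φr z).toReal - (φr xb).toReal| < ε) :
    ∀ u ∈ fsubdiff (PsiProd φl φc φr xb) xb, ∀ y ∈ eSubdiff φc xb,
      u + (φl xb).toReal • y ∈ fsubdiff (PhiProd φl φc φr) xb := by
  intro u hu y hy
  obtain ⟨δL, hδL, L0, hLip0⟩ := hlLip
  set L : ℝ := max L0 1 with hLdef
  have hL1 : (1:ℝ) ≤ L := le_max_right _ _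
  have hLpos : (0:ℝ) < L := lt_of_lt_of_le one_pos hL1
  have hLip : ∀ a b : En n, ‖a - xb‖ < δL → ‖b - xb‖ < δL →
      φl a ≠ ⊤ → φl b ≠ ⊤ → |(φl a).toReal - (φl b).toReal| ≤ L * ‖a - b‖ := by
    intro a b ha hb h1 h2
    refine (hLip0 a b ha hb h1 h2).trans ?_
    have := norm_nonneg (a - b)
    nlinarith [le_max_left L0 1]
  obtain ⟨hψtop, hψ⟩ := hu
  constructor
  · simp only [PhiProd, if_pos (show φl xb ≠ ⊤ ∧ φc xb ≠ ⊤ ∧ φr xb ≠ ⊤ from ⟨hdoml, hdomc, hdomr⟩)]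
    exact EReal.coe_ne_top _
  intro ε hε
  have hεr : (0:ℝ) < ε / (4 * L) := by positivity
  obtain ⟨δr, hδr, hrc⟩ := hrcont (ε / (4 * L)) hεr
  set δy : ℝ := ε / (4 * L * (‖y‖ + 1)) with hδydef
  have hδy : 0 < δy := by positivity
  have hδ : 0 < min δL (min δr δy) := by positivity
  filter_upwards [hψ (ε / 2) (by positivity), Metric.ball_mem_nhds xb hδ] with z hψz hball
  by_cases hzdom : φl z ≠ ⊤ ∧ φc z ≠ ⊤ ∧ φr z ≠ ⊤
  swap
  · have hz : PhiProd φl φc φr z = ⊤ := by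
      simp only [PhiProd, if_neg hzdom]
    rw [hz]; exact le_top
  obtain ⟨hzl, hzc, hzr⟩ := hzdom
  have hdist : ‖z - xb‖ < min δL (min δr δy) := by
    simpa [dist_eq_norm] using hball
  have hdL : ‖z - xb‖ < δL := lt_of_lt_of_le hdist (min_le_left _ _)
  have hdr : ‖z - xb‖ < δr :=
    lt_of_lt_of_le hdist ((min_le_right _ _).trans (min_le_left _ _))
  have hdy : ‖z - xb‖ < δy :=
    lt_of_lt_of_le hdist ((min_le_right _ _).trans (min_le_right _ _))
  set la := (φl xb).toReal
  set ca := (φc xb).toReal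
  set ra := (φr xb).toReal
  set lz := (φl z).toReal
  set cz := (φc z).toReal
  set rz := (φr z).toReal
  -- psi inequality as reals
  have hψz' : (ca + ra) * la + la * ra +
      ((inner ℝ u (z - xb) : ℝ) - ε / 2 * ‖z - xb‖) ≤ (ca + ra) * lz + la * rz := by
    have e1 : PsiProd φl φc φr xb xb = (((ca + ra) * la + la * ra : ℝ) : EReal) := by
      simp [PsiProd, hdoml, hdomr]; rfl
    have e2 : PsiProd φl φc φr xb z = (((ca + ra) * lz + la * rz : ℝ) : EReal) := by
      simp [PsiProd, hzl, hzr]; rfl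
    rw [e1, e2, ← EReal.coe_add, EReal.coe_le_coe_iff] at hψz
    linarith
  -- convex subgradient inequality as reals
  have hcR : ca + (inner ℝ y (z - xb) : ℝ) ≤ cz := by
    have := hy z
    rw [← EReal.coe_toReal hdomc (hbotc xb), ← EReal.coe_toReal hzc (hbotc z),
      ← EReal.coe_add, EReal.coe_le_coe_iff] at this
    linarith
  have hlz0 : 0 ≤ lz := by
    have := EReal.toReal_le_toReal (hl0 z) (by simp) hzl
    simpa using this
  have hLz : |lz - la| ≤ L * ‖z - xb‖ := by
    have := hLip z xb hdL (by simpa using hδL) hzl hdoml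
    simpa using this
  have hrz : |rz - ra| < ε / (4 * L) := hrc z hdr hzr
  have hCS : |(inner ℝ y (z - xb) : ℝ)| ≤ ‖y‖ * ‖z - xb‖ := abs_real_inner_le_norm y (z - xb)
  -- key product bounds
  obtain ⟨hLz1, hLz2⟩ := abs_le.mp hLz
  obtain ⟨hrz1, hrz2⟩ := abs_le.mp hrz.le
  obtain ⟨hCS1, hCS2⟩ := abs_le.mp hCS
  have hd0 : (0:ℝ) ≤ ‖z - xb‖ := norm_nonneg _
  have hy0 : (0:ℝ) ≤ ‖y‖ := norm_nonneg _
  have k1 : lz * ((inner ℝ y (z - xb) : ℝ)) ≤ lz * (cz - ca) :=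
    mul_le_mul_of_nonneg_left (by linarith) hlz0
  have k2 : -(L * ‖z - xb‖ * (‖y‖ * ‖z - xb‖)) ≤ (lz - la) * (inner ℝ y (z - xb) : ℝ) := by
    have h1 : |(lz - la) * (inner ℝ y (z - xb) : ℝ)| ≤ L * ‖z - xb‖ * (‖y‖ * ‖z - xb‖) := by
      rw [abs_mul]
      exact mul_le_mul hLz hCS (abs_nonneg _) (by positivity)
    linarith [neg_abs_le ((lz - la) * (inner ℝ y (z - xb) : ℝ))]
  have k3 : -(L * ‖z - xb‖ * (ε / (4 * L))) ≤ (lz - la) * (rz - ra) := by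
    have h1 : |(lz - la) * (rz - ra)| ≤ L * ‖z - xb‖ * (ε / (4 * L)) := by
      rw [abs_mul]
      exact mul_le_mul hLz hrz.le (abs_nonneg _) (by positivity)
    linarith [neg_abs_le ((lz - la) * (rz - ra))]
  have k4 : L * ‖z - xb‖ * (‖y‖ * ‖z - xb‖) ≤ ε / 4 * ‖z - xb‖ := by
    have h1 : L * (‖y‖ + 1) * ‖z - xb‖ ≤ ε / 4 := by
      have hpos : (0:ℝ) < 4 * L * (‖y‖ + 1) := by positivity
      have h2 : ‖z - xb‖ * (4 * L * (‖y‖ + 1)) < ε := (lt_div_iff₀ hpos).mp hdy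
      linarith
    nlinarith
  have k5 : L * ‖z - xb‖ * (ε / (4 * L)) = ε / 4 * ‖z - xb‖ := by
    field_simp
  -- conclude
  have e1 : PhiProd φl φc φr xb = ((la * (ca + ra) : ℝ) : EReal) := by
    simp [PhiProd, hdoml, hdomc, hdomr]; rfl
  have e2 : PhiProd φl φc φr z = ((lz * (cz + rz) : ℝ) : EReal) := by
    simp [PhiProd, hzl, hzc, hzr]; rfl
  rw [e1, e2, ← EReal.coe_add, EReal.coe_le_coe_iff]
  have hinner : (inner ℝ (u + la • y) (z - xb) : ℝ)
      = (inner ℝ u (z - xb) : ℝ) + la * (inner ℝ y (z - xb) : ℝ) := by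
    rw [inner_add_left, real_inner_smul_left]
  rw [hinner]
  have idA : lz * (cz + rz) = (ca + ra) * lz + la * rz + lz * (cz - ca)
      + (lz - la) * (rz - ra) - la * ra := by ring
  have idB : lz * (inner ℝ y (z - xb) : ℝ) = la * (inner ℝ y (z - xb) : ℝ)
      + (lz - la) * (inner ℝ y (z - xb) : ℝ) := by ring
  linarith [k1, k2, k3, k4, hψz']
end
end
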